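/- arXiv:1006.2814 — 2 statements merged into one kernel-verified Lean document; each statement's English description precedes it below -/
import Mathlib

section
/- The polytope Q+ ⊂ ℝ^4 has exactly 32 facets, given by the inequalities ±5x1 ± x2 ± 2x3 ± x4 ≤ 90 and ±x1 ± 5x2 ± x3 ± 2x4 ≤ 90 (all sign choices independent): each of these 32 inequalities is valid on Q+ and holds with equality on a 3-dimensional face, Q+ is exactly the set of points of ℝ^4 satisfying all 32 inequalities, and the symmetry group of Q+ generated by the sign changes of the four coordinates and the simultaneous transpositions x1 ↔ x2, x3 ↔ x4 acts transitively on these 32 facets. -/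
open scoped Pointwise

variable {V : Type*} [AddCommGroup V] [Module ℝ V]

/-- A polytope is the convex hull of a finite set of points. -/
def IsPolytope (P : Set V) : Prop :=
  ∃ S : Set V, S.Finite ∧ P = convexHull ℝ S

/-- The dimension of a set: the dimension of its affine span. -/
noncomputable def adim (P : Set V) : ℕ :=
  Module.finrank ℝ (vectorSpan ℝ P)

/-- A face of a polytope: the set of maximizers over it of some linear functional. -/
def IsFaceOf (F P : Set V) : Prop :=
  ∃ l : V →ₗ[ℝ] ℝ, F = {x ∈ P | ∀ y ∈ P, l y ≤ l x}

/-- A vertex: a point whose singleton is a face. -/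
def IsVertexOf (x : V) (P : Set V) : Prop := IsFaceOf {x} P

/-- A facet: a face of dimension `dim P - 1`. -/
def IsFacetOf (F P : Set V) : Prop := IsFaceOf F P ∧ adim F + 1 = adim P

/-- A ridge: a face of dimension `dim P - 2`. -/
def IsRidgeOf (F P : Set V) : Prop := IsFaceOf F P ∧ adim F + 2 = adim P

def vertexSet (P : Set V) : Set V := {x | IsVertexOf x P}

/-- The graph of a polytope: vertices are its vertices, adjacency means being
the two endpoints of an edge (a one-dimensional face, i.e. the segment between
them is a face). -/
def polyGraph (P : Set V) : SimpleGraph V where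
  Adj x y := x ≠ y ∧ IsVertexOf x P ∧ IsVertexOf y P ∧ IsFaceOf (segment ℝ x y) P
  symm := by
    constructor
    rintro x y ⟨hxy, hx, hy, hseg⟩
    exact ⟨hxy.symm, hy, hx, by rwa [segment_symm]⟩
  loopless := by constructor; rintro x ⟨h, -⟩; exact h rfl

/-- Graph distance between two vertices of a polytope. -/
noncomputable def vertexDist (P : Set V) (x y : V) : ℕ := (polyGraph P).dist x y

/-- The combinatorial diameter of a polytope: the diameter of its graph. -/
noncomputable def polyDiam (P : Set V) : ℕ :=
  sSup {n | ∃ x y, IsVertexOf x P ∧ IsVertexOf y P ∧ vertexDist P x y = n}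

noncomputable def numFacets (P : Set V) : ℕ := {F | IsFacetOf F P}.ncard

noncomputable def numVertices (P : Set V) : ℕ := (vertexSet P).ncard

/-- The dual graph of a polytope: nodes are its facets, two facets adjacent iff
their intersection is a ridge. -/
def dualGraph (P : Set V) : SimpleGraph (Set V) where
  Adj F F' := F ≠ F' ∧ IsFacetOf F P ∧ IsFacetOf F' P ∧ IsRidgeOf (F ∩ F') P
  symm := by
    constructor
    rintro F F' ⟨hne, hF, hF', hr⟩
    exact ⟨hne.symm, hF', hF, by rwa [Set.inter_comm]⟩
  loopless := by constructor; rintro F ⟨h, -⟩; exact h rfl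

/-- Dual distance between two facets. -/
noncomputable def dualDist (P F F' : Set V) : ℕ := (dualGraph P).dist F F'

/-- The dual diameter of a polytope. -/
noncomputable def dualDiam (P : Set V) : ℕ :=
  sSup {n | ∃ F F', IsFacetOf F P ∧ IsFacetOf F' P ∧ dualDist P F F' = n}

/-- `Hdiam n d` : the maximum combinatorial diameter of a `d`-dimensional
polytope with `n` facets. -/
noncomputable def Hdiam (n d : ℕ) : ℕ :=
  sSup {δ | ∃ (N : ℕ) (P : Set (Fin N → ℝ)),
    IsPolytope P ∧ adim P = d ∧ numFacets P = n ∧ polyDiam P = δ}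

/-- A spindle: a polytope with two distinguished vertices `u`, `v` such that
every facet contains exactly one of them. -/
structure IsSpindle (P : Set V) (u v : V) : Prop where
  poly : IsPolytope P
  vert_u : IsVertexOf u P
  vert_v : IsVertexOf v P
  facet_cond : ∀ F, IsFacetOf F P → (u ∈ F ↔ v ∉ F)

/-- A prismatoid: a polytope with two designated parallel facets containing all
of its vertices. -/
structure IsPrismatoid (Q Qp Qm : Set V) : Prop where
  poly : IsPolytope Q
  facet_p : IsFacetOf Qp Q
  facet_m : IsFacetOf Qm Q
  parallel : ∃ (l : V →ₗ[ℝ] ℝ) (c₁ c₂ : ℝ), l ≠ 0 ∧ c₁ ≠ c₂ ∧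
    (∀ x ∈ Qp, l x = c₁) ∧ (∀ x ∈ Qm, l x = c₂)
  verts : vertexSet Q ⊆ Qp ∪ Qm

/-- A polytope is simplicial if every facet has exactly `dim P` vertices. -/
def IsSimplicial (P : Set V) : Prop :=
  ∀ F, IsFacetOf F P → (vertexSet F).ncard = adim P

/-- A polytope is simple if every vertex lies in exactly `dim P` facets. -/
def IsSimple (P : Set V) : Prop :=
  ∀ x, IsVertexOf x P → {F | IsFacetOf F P ∧ x ∈ F}.ncard = adim P

def Sgn : Set ℝ := {1, -1}

/-- The 24 vertices of `Q⁺ ⊂ ℝ⁴`. -/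
def QplusPts : Set (Fin 4 → ℝ) :=
  {x | ∃ a ∈ Sgn, ∃ b ∈ Sgn,
    x = ![a * 18, 0, 0, 0] ∨ x = ![0, a * 18, 0, 0] ∨
    x = ![0, 0, a * 45, 0] ∨ x = ![0, 0, 0, a * 45] ∨
    x = ![a * 15, b * 15, 0, 0] ∨ x = ![0, 0, a * 30, b * 30] ∨
    x = ![0, a * 10, b * 40, 0] ∨ x = ![a * 10, 0, 0, b * 40]}

noncomputable def Qplus4 : Set (Fin 4 → ℝ) := convexHull ℝ QplusPts

/-- The 32 outer facet normals `(±5,±1,±2,±1)`, `(±1,±5,±1,±2)` of `Q⁺`. -/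
def Wplus : Set (Fin 4 → ℝ) :=
  {w | ∃ e : Fin 4 → ℝ, (∀ i, e i = 1 ∨ e i = -1) ∧
    (w = ![5 * e 0, e 1, 2 * e 2, e 3] ∨ w = ![e 0, 5 * e 1, e 2, 2 * e 3])}

/-- The index permutation swapping `x₁ ↔ x₂` and `x₃ ↔ x₄`. -/
def swapIdx : Fin 4 → Fin 4 := ![1, 0, 3, 2]

/-- The symmetry group of `Q⁺`: maps generated by the sign changes of the four
coordinates together with the simultaneous transpositions `x₁ ↔ x₂`,
`x₃ ↔ x₄`. -/
def SymGrp : Set ((Fin 4 → ℝ) → (Fin 4 → ℝ)) :=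
  {T | ∃ (s : Fin 4 → ℝ) (sw : Bool), (∀ i, s i = 1 ∨ s i = -1) ∧
    T = fun x i => s i * x (if sw then swapIdx i else i)}

section Aux

def w0 : Fin 4 → ℝ := ![5, 1, 2, 1]

/-- the linear functional `x ↦ ∑ i, w i * x i`. -/
def lfun (w : Fin 4 → ℝ) : (Fin 4 → ℝ) →ₗ[ℝ] ℝ where
  toFun x := ∑ i, w i * x i
  map_add' x y := by simp [mul_add, Finset.sum_add_distrib]
  map_smul' c x := by simp only [Finset.mul_sum, smul_eq_mul, Pi.smul_apply, RingHom.id_apply]; exact Finset.sum_congr rfl fun i _ => by ring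

@[simp] lemma lfun_apply (w x : Fin 4 → ℝ) : lfun w x = ∑ i, w i * x i := rfl

/-- sign-change/swap linear maps -/
def Tmap (s : Fin 4 → ℝ) (sw : Bool) : (Fin 4 → ℝ) →ₗ[ℝ] (Fin 4 → ℝ) where
  toFun x := fun i => s i * x (if sw then swapIdx i else i)
  map_add' x y := by funext i; simp [mul_add]
  map_smul' c x := by funext i; simp; ring

@[simp] lemma Tmap_apply (s : Fin 4 → ℝ) (sw : Bool) (x : Fin 4 → ℝ) (i : Fin 4) :
    Tmap s sw x i = s i * x (if sw then swapIdx i else i) := rfl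

lemma Tmap_mem_SymGrp (s : Fin 4 → ℝ) (sw : Bool) (hs : ∀ i, s i = 1 ∨ s i = -1) :
    ⇑(Tmap s sw) ∈ SymGrp := ⟨s, sw, hs, rfl⟩

lemma swapIdx_swapIdx (i : Fin 4) : swapIdx (swapIdx i) = i := by
  fin_cases i <;> rfl

lemma sq_one_of_pm {a : ℝ} (h : a = 1 ∨ a = -1) : a * a = 1 := by
  rcases h with rfl | rfl <;> norm_num

lemma Tmap_comp (s t : Fin 4 → ℝ) (sw tw : Bool) (x : Fin 4 → ℝ) :
    Tmap s sw (Tmap t tw x) = Tmap (fun i => s i * t (if sw then swapIdx i else i)) (xor sw tw) x := by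
  funext i
  cases sw <;> cases tw <;> simp [swapIdx_swapIdx, mul_assoc]

def invSigns (s : Fin 4 → ℝ) (sw : Bool) : Fin 4 → ℝ :=
  fun i => if sw then s (swapIdx i) else s i

lemma invSigns_pm {s : Fin 4 → ℝ} (sw : Bool) (hs : ∀ i, s i = 1 ∨ s i = -1) :
    ∀ i, invSigns s sw i = 1 ∨ invSigns s sw i = -1 := by
  intro i; unfold invSigns; cases sw <;> simp [hs]

lemma Tmap_inv (s : Fin 4 → ℝ) (sw : Bool) (hs : ∀ i, s i = 1 ∨ s i = -1) (x : Fin 4 → ℝ) :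
    Tmap (invSigns s sw) sw (Tmap s sw x) = x := by
  funext i
  cases sw <;> simp [invSigns, swapIdx_swapIdx, ← mul_assoc, sq_one_of_pm (hs _)]

lemma Tmap_inv' (s : Fin 4 → ℝ) (sw : Bool) (hs : ∀ i, s i = 1 ∨ s i = -1) (x : Fin 4 → ℝ) :
    Tmap s sw (Tmap (invSigns s sw) sw x) = x := by
  funext i
  cases sw <;> simp [invSigns, swapIdx_swapIdx, ← mul_assoc, sq_one_of_pm (hs _)]

end Aux

section Pts

lemma one_mem_Sgn : (1 : ℝ) ∈ Sgn := by simp [Sgn]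

lemma Sgn_iff {a : ℝ} : a ∈ Sgn ↔ a = 1 ∨ a = -1 := by simp [Sgn]

lemma Sgn_mul {a b : ℝ} (ha : a ∈ Sgn) (hb : b ∈ Sgn) : a * b ∈ Sgn := by
  rw [Sgn_iff] at *; rcases ha with rfl|rfl <;> rcases hb with rfl|rfl <;> norm_num

lemma mem1 {a : ℝ} (ha : a ∈ Sgn) : ![a * 18, 0, 0, 0] ∈ QplusPts :=
  ⟨a, ha, 1, one_mem_Sgn, Or.inl rfl⟩
lemma mem2 {a : ℝ} (ha : a ∈ Sgn) : ![0, a * 18, 0, 0] ∈ QplusPts :=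
  ⟨a, ha, 1, one_mem_Sgn, Or.inr (Or.inl rfl)⟩
lemma mem3 {a : ℝ} (ha : a ∈ Sgn) : ![0, 0, a * 45, 0] ∈ QplusPts :=
  ⟨a, ha, 1, one_mem_Sgn, Or.inr (Or.inr (Or.inl rfl))⟩
lemma mem4 {a : ℝ} (ha : a ∈ Sgn) : ![0, 0, 0, a * 45] ∈ QplusPts :=
  ⟨a, ha, 1, one_mem_Sgn, Or.inr (Or.inr (Or.inr (Or.inl rfl)))⟩
lemma mem5 {a b : ℝ} (ha : a ∈ Sgn) (hb : b ∈ Sgn) : ![a * 15, b * 15, 0, 0] ∈ QplusPts :=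
  ⟨a, ha, b, hb, Or.inr (Or.inr (Or.inr (Or.inr (Or.inl rfl))))⟩
lemma mem6 {a b : ℝ} (ha : a ∈ Sgn) (hb : b ∈ Sgn) : ![0, 0, a * 30, b * 30] ∈ QplusPts :=
  ⟨a, ha, b, hb, Or.inr (Or.inr (Or.inr (Or.inr (Or.inr (Or.inl rfl)))))⟩
lemma mem7 {a b : ℝ} (ha : a ∈ Sgn) (hb : b ∈ Sgn) : ![0, a * 10, b * 40, 0] ∈ QplusPts :=
  ⟨a, ha, b, hb, Or.inr (Or.inr (Or.inr (Or.inr (Or.inr (Or.inr (Or.inl rfl))))))⟩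
lemma mem8 {a b : ℝ} (ha : a ∈ Sgn) (hb : b ∈ Sgn) : ![a * 10, 0, 0, b * 40] ∈ QplusPts :=
  ⟨a, ha, b, hb, Or.inr (Or.inr (Or.inr (Or.inr (Or.inr (Or.inr (Or.inr rfl))))))⟩

lemma Tmap_mem_QplusPts {s : Fin 4 → ℝ} {sw : Bool} (hs : ∀ i, s i = 1 ∨ s i = -1)
    {v : Fin 4 → ℝ} (hv : v ∈ QplusPts) : Tmap s sw v ∈ QplusPts := by
  have hs' : ∀ i, s i ∈ Sgn := fun i => Sgn_iff.mpr (hs i)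
  obtain ⟨a, ha, b, hb, hv⟩ := hv
  cases sw
  · rcases hv with rfl|rfl|rfl|rfl|rfl|rfl|rfl|rfl
    · have h : Tmap s false ![a * 18, 0, 0, 0] = ![(s 0 * a) * 18, 0, 0, 0] := by
        funext i; fin_cases i <;> simp [swapIdx] <;> ring
      rw [h]; exact mem1 (Sgn_mul (hs' 0) ha)
    · have h : Tmap s false ![0, a * 18, 0, 0] = ![0, (s 1 * a) * 18, 0, 0] := by
        funext i; fin_cases i <;> simp [swapIdx] <;> ring
      rw [h]; exact mem2 (Sgn_mul (hs' 1) ha)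
    · have h : Tmap s false ![0, 0, a * 45, 0] = ![0, 0, (s 2 * a) * 45, 0] := by
        funext i; fin_cases i <;> simp [swapIdx] <;> ring
      rw [h]; exact mem3 (Sgn_mul (hs' 2) ha)
    · have h : Tmap s false ![0, 0, 0, a * 45] = ![0, 0, 0, (s 3 * a) * 45] := by
        funext i; fin_cases i <;> simp [swapIdx] <;> ring
      rw [h]; exact mem4 (Sgn_mul (hs' 3) ha)
    · have h : Tmap s false ![a * 15, b * 15, 0, 0] = ![(s 0 * a) * 15, (s 1 * b) * 15, 0, 0] := by
        funext i; fin_cases i <;> simp [swapIdx] <;> ring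
      rw [h]; exact mem5 (Sgn_mul (hs' 0) ha) (Sgn_mul (hs' 1) hb)
    · have h : Tmap s false ![0, 0, a * 30, b * 30] = ![0, 0, (s 2 * a) * 30, (s 3 * b) * 30] := by
        funext i; fin_cases i <;> simp [swapIdx] <;> ring
      rw [h]; exact mem6 (Sgn_mul (hs' 2) ha) (Sgn_mul (hs' 3) hb)
    · have h : Tmap s false ![0, a * 10, b * 40, 0] = ![0, (s 1 * a) * 10, (s 2 * b) * 40, 0] := by
        funext i; fin_cases i <;> simp [swapIdx] <;> ring
      rw [h]; exact mem7 (Sgn_mul (hs' 1) ha) (Sgn_mul (hs' 2) hb)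
    · have h : Tmap s false ![a * 10, 0, 0, b * 40] = ![(s 0 * a) * 10, 0, 0, (s 3 * b) * 40] := by
        funext i; fin_cases i <;> simp [swapIdx] <;> ring
      rw [h]; exact mem8 (Sgn_mul (hs' 0) ha) (Sgn_mul (hs' 3) hb)
  · rcases hv with rfl|rfl|rfl|rfl|rfl|rfl|rfl|rfl
    · have h : Tmap s true ![a * 18, 0, 0, 0] = ![0, (s 1 * a) * 18, 0, 0] := by
        funext i; fin_cases i <;> simp [swapIdx] <;> ring
      rw [h]; exact mem2 (Sgn_mul (hs' 1) ha)
    · have h : Tmap s true ![0, a * 18, 0, 0] = ![(s 0 * a) * 18, 0, 0, 0] := by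
        funext i; fin_cases i <;> simp [swapIdx] <;> ring
      rw [h]; exact mem1 (Sgn_mul (hs' 0) ha)
    · have h : Tmap s true ![0, 0, a * 45, 0] = ![0, 0, 0, (s 3 * a) * 45] := by
        funext i; fin_cases i <;> simp [swapIdx] <;> ring
      rw [h]; exact mem4 (Sgn_mul (hs' 3) ha)
    · have h : Tmap s true ![0, 0, 0, a * 45] = ![0, 0, (s 2 * a) * 45, 0] := by
        funext i; fin_cases i <;> simp [swapIdx] <;> ring
      rw [h]; exact mem3 (Sgn_mul (hs' 2) ha)
    · have h : Tmap s true ![a * 15, b * 15, 0, 0] = ![(s 0 * b) * 15, (s 1 * a) * 15, 0, 0] := by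
        funext i; fin_cases i <;> simp [swapIdx] <;> ring
      rw [h]; exact mem5 (Sgn_mul (hs' 0) hb) (Sgn_mul (hs' 1) ha)
    · have h : Tmap s true ![0, 0, a * 30, b * 30] = ![0, 0, (s 2 * b) * 30, (s 3 * a) * 30] := by
        funext i; fin_cases i <;> simp [swapIdx] <;> ring
      rw [h]; exact mem6 (Sgn_mul (hs' 2) hb) (Sgn_mul (hs' 3) ha)
    · have h : Tmap s true ![0, a * 10, b * 40, 0] = ![(s 0 * a) * 10, 0, 0, (s 3 * b) * 40] := by
        funext i; fin_cases i <;> simp [swapIdx] <;> ring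
      rw [h]; exact mem8 (Sgn_mul (hs' 0) ha) (Sgn_mul (hs' 3) hb)
    · have h : Tmap s true ![a * 10, 0, 0, b * 40] = ![0, (s 1 * a) * 10, (s 2 * b) * 40, 0] := by
        funext i; fin_cases i <;> simp [swapIdx] <;> ring
      rw [h]; exact mem7 (Sgn_mul (hs' 1) ha) (Sgn_mul (hs' 2) hb)

lemma Tmap_image_QplusPts {s : Fin 4 → ℝ} {sw : Bool} (hs : ∀ i, s i = 1 ∨ s i = -1) :
    Tmap s sw '' QplusPts = QplusPts := by
  apply Set.Subset.antisymm
  · rintro _ ⟨v, hv, rfl⟩; exact Tmap_mem_QplusPts hs hv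
  · intro v hv
    exact ⟨Tmap (invSigns s sw) sw v, Tmap_mem_QplusPts (invSigns_pm sw hs) hv,
      Tmap_inv' s sw hs v⟩

lemma Tmap_image_Qplus4 {s : Fin 4 → ℝ} {sw : Bool} (hs : ∀ i, s i = 1 ∨ s i = -1) :
    Tmap s sw '' Qplus4 = Qplus4 := by
  unfold Qplus4
  rw [(Tmap s sw).image_convexHull, Tmap_image_QplusPts hs]

end Pts

section Valid

lemma pmul_le {a b : ℝ} (ha : a = 1 ∨ a = -1) (hb : b = 1 ∨ b = -1) :
    -1 ≤ a * b ∧ a * b ≤ 1 := by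
  rcases ha with rfl|rfl <;> rcases hb with rfl|rfl <;> norm_num

lemma valid_on_pts {w : Fin 4 → ℝ} (hw : w ∈ Wplus) {v : Fin 4 → ℝ} (hv : v ∈ QplusPts) :
    ∑ i, w i * v i ≤ 90 := by
  obtain ⟨e, he, hw⟩ := hw
  obtain ⟨a, ha, b, hb, hv⟩ := hv
  rw [Sgn_iff] at ha hb
  rcases hw with rfl|rfl <;> rcases hv with rfl|rfl|rfl|rfl|rfl|rfl|rfl|rfl <;>
    simp [Fin.sum_univ_four] <;>
    linarith [(pmul_le (he 0) ha).1, (pmul_le (he 0) ha).2, (pmul_le (he 1) ha).1,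
      (pmul_le (he 1) ha).2, (pmul_le (he 2) ha).1, (pmul_le (he 2) ha).2,
      (pmul_le (he 3) ha).1, (pmul_le (he 3) ha).2, (pmul_le (he 0) hb).1,
      (pmul_le (he 0) hb).2, (pmul_le (he 1) hb).1, (pmul_le (he 1) hb).2,
      (pmul_le (he 2) hb).1, (pmul_le (he 2) hb).2, (pmul_le (he 3) hb).1,
      (pmul_le (he 3) hb).2]

lemma Qpts_subset : QplusPts ⊆ Qplus4 := subset_convexHull ℝ _

lemma valid_on_Q {w : Fin 4 → ℝ} (hw : w ∈ Wplus) : ∀ x ∈ Qplus4, ∑ i, w i * x i ≤ 90 := by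
  intro x hx
  have h : Qplus4 ⊆ {x | lfun w x ≤ 90} :=
    convexHull_min (fun v hv => valid_on_pts hw hv) (convex_halfSpace_le (lfun w).isLinear 90)
  exact h hx

end Valid

section Adim

lemma vectorSpan_convexHull (s : Set (Fin 4 → ℝ)) :
    vectorSpan ℝ (convexHull ℝ s) = vectorSpan ℝ s := by
  rw [← direction_affineSpan, affineSpan_convexHull, direction_affineSpan]

lemma li4 : LinearIndependent ℝ
    ![![(36:ℝ),0,0,0], ![0,36,0,0], ![0,0,90,0], ![0,0,0,90]] := by
  rw [Fintype.linearIndependent_iff]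
  intro g hg
  have h0 := congrFun hg 0
  have h1 := congrFun hg 1
  have h2 := congrFun hg 2
  have h3 := congrFun hg 3
  simp [Fin.sum_univ_four, Matrix.vecHead, Matrix.vecTail] at h0 h1 h2 h3
  intro j; fin_cases j <;> simp <;> linarith

lemma diff_mem_vs {u v d : Fin 4 → ℝ} (hu : u ∈ QplusPts) (hv : v ∈ QplusPts)
    (h : d = u - v) : d ∈ vectorSpan ℝ QplusPts := by
  rw [h]; exact vsub_mem_vectorSpan ℝ hu hv

lemma adim_Qplus4 : adim Qplus4 = 4 := by
  unfold adim Qplus4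
  rw [vectorSpan_convexHull]
  apply le_antisymm
  · have := Submodule.finrank_le (vectorSpan ℝ QplusPts)
    simpa using this
  · have hsub : Set.range ![![(36:ℝ),0,0,0], ![0,36,0,0], ![0,0,90,0], ![0,0,0,90]]
        ⊆ (vectorSpan ℝ QplusPts : Set (Fin 4 → ℝ)) := by
      rintro _ ⟨i, rfl⟩
      fin_cases i
      · exact diff_mem_vs (mem1 (a := 1) (by norm_num [Sgn])) (mem1 (a := -1) (by norm_num [Sgn]))
          (by funext j; fin_cases j <;> norm_num)
      · exact diff_mem_vs (mem2 (a := 1) (by norm_num [Sgn])) (mem2 (a := -1) (by norm_num [Sgn]))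
          (by funext j; fin_cases j <;> norm_num)
      · exact diff_mem_vs (mem3 (a := 1) (by norm_num [Sgn])) (mem3 (a := -1) (by norm_num [Sgn]))
          (by funext j; fin_cases j <;> norm_num)
      · exact diff_mem_vs (mem4 (a := 1) (by norm_num [Sgn])) (mem4 (a := -1) (by norm_num [Sgn]))
          (by funext j; fin_cases j <;> norm_num)
    have hle := Submodule.span_le.mpr hsub
    have := Submodule.finrank_mono hle
    rw [finrank_span_eq_card li4] at this
    simpa using this

end Adim

section K0sec

def K0 : Set (Fin 4 → ℝ) :=
  {y | (∀ i, 0 ≤ y i) ∧ 5 * y 0 + y 1 + 2 * y 2 + y 3 ≤ 90 ∧ y 0 + 5 * y 1 + y 2 + 2 * y 3 ≤ 90}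

def C9 : Set (Fin 4 → ℝ) :=
  {0, ![18,0,0,0], ![0,18,0,0], ![0,0,45,0], ![0,0,0,45],
   ![15,15,0,0], ![0,0,30,30], ![0,10,40,0], ![10,0,0,40]}

lemma vec_ext {y : Fin 4 → ℝ} {a b c d : ℝ} (h0 : y 0 = a) (h1 : y 1 = b)
    (h2 : y 2 = c) (h3 : y 3 = d) : y = ![a, b, c, d] := by
  funext i; fin_cases i <;> simpa using (by assumption)

lemma K0_convex : Convex ℝ K0 := by
  intro x hx y hy a b ha hb hab
  obtain ⟨hx0, hx1, hx2⟩ := hx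
  obtain ⟨hy0, hy1, hy2⟩ := hy
  refine ⟨fun i => ?_, ?_, ?_⟩
  · simp only [Pi.add_apply, Pi.smul_apply, smul_eq_mul]
    exact add_nonneg (mul_nonneg ha (hx0 i)) (mul_nonneg hb (hy0 i))
  · simp only [Pi.add_apply, Pi.smul_apply, smul_eq_mul]
    nlinarith [mul_le_mul_of_nonneg_left hx1 ha, mul_le_mul_of_nonneg_left hy1 hb]
  · simp only [Pi.add_apply, Pi.smul_apply, smul_eq_mul]
    nlinarith [mul_le_mul_of_nonneg_left hx2 ha, mul_le_mul_of_nonneg_left hy2 hb]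

lemma K0_closed : IsClosed K0 := by
  have h1 : K0 = (⋂ i, {y : Fin 4 → ℝ | 0 ≤ y i}) ∩
      ({y : Fin 4 → ℝ | 5 * y 0 + y 1 + 2 * y 2 + y 3 ≤ 90} ∩
       {y : Fin 4 → ℝ | y 0 + 5 * y 1 + y 2 + 2 * y 3 ≤ 90}) := by
    ext y; constructor
    · rintro ⟨h0, h1, h2⟩; exact ⟨by simpa using h0, h1, h2⟩
    · rintro ⟨h0, h1, h2⟩; exact ⟨by simpa using h0, h1, h2⟩
  rw [h1]
  refine IsClosed.inter (isClosed_iInter fun i => isClosed_le continuous_const (continuous_apply i))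
    (IsClosed.inter (isClosed_le (by fun_prop) continuous_const)
      (isClosed_le (by fun_prop) continuous_const))

lemma K0_compact : IsCompact K0 := by
  refine IsCompact.of_isClosed_subset (isCompact_Icc (a := (0 : Fin 4 → ℝ))
    (b := fun _ => 90)) K0_closed ?_
  rintro y ⟨h0, h1, h2⟩
  constructor
  · intro i; exact h0 i
  · intro i; fin_cases i <;> simp <;> linarith [h0 0, h0 1, h0 2, h0 3]

lemma C9_subset_K0 : C9 ⊆ K0 := by
  intro y hy
  simp only [C9, Set.mem_insert_iff, Set.mem_singleton_iff] at hy
  rcases hy with rfl|rfl|rfl|rfl|rfl|rfl|rfl|rfl|rfl <;>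
    exact ⟨fun i => by fin_cases i <;> norm_num, by norm_num [Matrix.cons_val_two, Matrix.cons_val_three], by norm_num [Matrix.cons_val_two, Matrix.cons_val_three]⟩

end K0sec

section Extreme

lemma memC9_0 : (0 : Fin 4 → ℝ) ∈ C9 := by simp [C9]
lemma memC9_1 : ![(18:ℝ),0,0,0] ∈ C9 := by simp [C9]
lemma memC9_2 : ![(0:ℝ),18,0,0] ∈ C9 := by simp [C9]
lemma memC9_3 : ![(0:ℝ),0,45,0] ∈ C9 := by simp [C9]
lemma memC9_4 : ![(0:ℝ),0,0,45] ∈ C9 := by simp [C9]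
lemma memC9_5 : ![(15:ℝ),15,0,0] ∈ C9 := by simp [C9]
lemma memC9_6 : ![(0:ℝ),0,30,30] ∈ C9 := by simp [C9]
lemma memC9_7 : ![(0:ℝ),10,40,0] ∈ C9 := by simp [C9]
lemma memC9_8 : ![(10:ℝ),0,0,40] ∈ C9 := by simp [C9]

lemma pert {y : Fin 4 → ℝ} (hmid : ∀ d, y + d ∈ K0 → y - d ∈ K0 → d = 0)
    (d : Fin 4 → ℝ) (ε : ℝ) (hε : 0 < ε) (hd : d ≠ 0)
    (h1 : y + ε • d ∈ K0) (h2 : y - ε • d ∈ K0) : False := by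
  have h := hmid _ h1 h2
  rcases smul_eq_zero.mp h with h' | h'
  · exact hε.ne' h'
  · exact hd h'

set_option maxHeartbeats 2000000 in
lemma extreme_sub : K0.extremePoints ℝ ⊆ C9 := by
  intro y hy
  obtain ⟨hyK, hext⟩ := hy
  have hmid : ∀ d : Fin 4 → ℝ, y + d ∈ K0 → y - d ∈ K0 → d = 0 := by
    intro d h1 h2
    have h3 : y ∈ openSegment ℝ (y + d) (y - d) := by
      refine ⟨1/2, 1/2, by norm_num, by norm_num, by norm_num, ?_⟩
      funext i
      simp only [Pi.add_apply, Pi.sub_apply, Pi.smul_apply, smul_eq_mul]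
      ring
    have h4 := hext h1 h2 h3
    have h5 := h4
    exact add_eq_left.mp h5
  obtain ⟨hpos, hA, hB⟩ := hyK
  have hpos' : ∀ i, y i ≠ 0 → 0 < y i := fun i h => (hpos i).lt_of_ne (Ne.symm h)
  rcases eq_or_lt_of_le hA with hA' | hA' <;> rcases eq_or_lt_of_le hB with hB' | hB'
  · -- both tight
    have ht0 : ¬(0 < y 1 ∧ 0 < y 2 ∧ 0 < y 3) := by
      rintro ⟨hc1, hc2, hc3⟩
      obtain ⟨ε, hε, he1, he2, he3⟩ : ∃ ε : ℝ, 0 < ε ∧ ε ≤ y 1 / 1 ∧ ε ≤ y 2 / 1 ∧ ε ≤ (y 3 / 3) :=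
        ⟨min (min (y 1 / 1) (y 2 / 1)) (y 3 / 3), lt_min (lt_min (div_pos hc1 (by norm_num)) (div_pos hc2 (by norm_num)))
        (div_pos hc3 (by norm_num)),
         le_trans (min_le_left _ _) (min_le_left _ _),
         le_trans (min_le_left _ _) (min_le_right _ _), min_le_right _ _⟩
      have hplus : y + ε • ![(0:ℝ),1,1,-3] ∈ K0 := by
        refine ⟨fun i => ?_, by simp; linarith, by simp; linarith⟩
        fin_cases i <;> simp <;> linarith [hpos 0, hpos 1, hpos 2, hpos 3]
      have hminus : y - ε • ![(0:ℝ),1,1,-3] ∈ K0 := by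
        refine ⟨fun i => ?_, by simp; linarith, by simp; linarith⟩
        fin_cases i <;> simp <;> linarith [hpos 0, hpos 1, hpos 2, hpos 3]
      exact pert hmid ![(0:ℝ),1,1,-3] ε hε (by intro h; have := congrFun h 1; norm_num at this) hplus hminus
    have ht1 : ¬(0 < y 0 ∧ 0 < y 2 ∧ 0 < y 3) := by
      rintro ⟨hc1, hc2, hc3⟩
      obtain ⟨ε, hε, he1, he2, he3⟩ : ∃ ε : ℝ, 0 < ε ∧ ε ≤ y 0 / 1 ∧ ε ≤ y 2 / 3 ∧ ε ≤ (y 3 / 1) :=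
        ⟨min (min (y 0 / 1) (y 2 / 3)) (y 3 / 1), lt_min (lt_min (div_pos hc1 (by norm_num)) (div_pos hc2 (by norm_num)))
        (div_pos hc3 (by norm_num)),
         le_trans (min_le_left _ _) (min_le_left _ _),
         le_trans (min_le_left _ _) (min_le_right _ _), min_le_right _ _⟩
      have hplus : y + ε • ![(-1:ℝ),0,3,-1] ∈ K0 := by
        refine ⟨fun i => ?_, by simp; linarith, by simp; linarith⟩
        fin_cases i <;> simp <;> linarith [hpos 0, hpos 1, hpos 2, hpos 3]
      have hminus : y - ε • ![(-1:ℝ),0,3,-1] ∈ K0 := by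
        refine ⟨fun i => ?_, by simp; linarith, by simp; linarith⟩
        fin_cases i <;> simp <;> linarith [hpos 0, hpos 1, hpos 2, hpos 3]
      exact pert hmid ![(-1:ℝ),0,3,-1] ε hε (by intro h; have := congrFun h 0; norm_num at this) hplus hminus
    have ht2 : ¬(0 < y 0 ∧ 0 < y 1 ∧ 0 < y 3) := by
      rintro ⟨hc1, hc2, hc3⟩
      obtain ⟨ε, hε, he1, he2, he3⟩ : ∃ ε : ℝ, 0 < ε ∧ ε ≤ y 0 / 1 ∧ ε ≤ y 1 / 3 ∧ ε ≤ (y 3 / 8) :=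
        ⟨min (min (y 0 / 1) (y 1 / 3)) (y 3 / 8), lt_min (lt_min (div_pos hc1 (by norm_num)) (div_pos hc2 (by norm_num)))
        (div_pos hc3 (by norm_num)),
         le_trans (min_le_left _ _) (min_le_left _ _),
         le_trans (min_le_left _ _) (min_le_right _ _), min_le_right _ _⟩
      have hplus : y + ε • ![(1:ℝ),3,0,-8] ∈ K0 := by
        refine ⟨fun i => ?_, by simp; linarith, by simp; linarith⟩
        fin_cases i <;> simp <;> linarith [hpos 0, hpos 1, hpos 2, hpos 3]
      have hminus : y - ε • ![(1:ℝ),3,0,-8] ∈ K0 := by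
        refine ⟨fun i => ?_, by simp; linarith, by simp; linarith⟩
        fin_cases i <;> simp <;> linarith [hpos 0, hpos 1, hpos 2, hpos 3]
      exact pert hmid ![(1:ℝ),3,0,-8] ε hε (by intro h; have := congrFun h 0; norm_num at this) hplus hminus
    have ht3 : ¬(0 < y 0 ∧ 0 < y 1 ∧ 0 < y 2) := by
      rintro ⟨hc1, hc2, hc3⟩
      obtain ⟨ε, hε, he1, he2, he3⟩ : ∃ ε : ℝ, 0 < ε ∧ ε ≤ y 0 / 3 ∧ ε ≤ y 1 / 1 ∧ ε ≤ (y 2 / 8) :=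
        ⟨min (min (y 0 / 3) (y 1 / 1)) (y 2 / 8), lt_min (lt_min (div_pos hc1 (by norm_num)) (div_pos hc2 (by norm_num)))
        (div_pos hc3 (by norm_num)),
         le_trans (min_le_left _ _) (min_le_left _ _),
         le_trans (min_le_left _ _) (min_le_right _ _), min_le_right _ _⟩
      have hplus : y + ε • ![(3:ℝ),1,-8,0] ∈ K0 := by
        refine ⟨fun i => ?_, by simp; linarith, by simp; linarith⟩
        fin_cases i <;> simp <;> linarith [hpos 0, hpos 1, hpos 2, hpos 3]
      have hminus : y - ε • ![(3:ℝ),1,-8,0] ∈ K0 := by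
        refine ⟨fun i => ?_, by simp; linarith, by simp; linarith⟩
        fin_cases i <;> simp <;> linarith [hpos 0, hpos 1, hpos 2, hpos 3]
      exact pert hmid ![(3:ℝ),1,-8,0] ε hε (by intro h; have := congrFun h 0; norm_num at this) hplus hminus
    by_cases k0 : y 0 = 0
    · by_cases k1 : y 1 = 0
      · by_cases k2 : y 2 = 0
        · by_cases k3 : y 3 = 0
          · exfalso; rw [k0,k1,k2,k3] at hA'; norm_num at hA'
          · exfalso; rw [k0,k1,k2] at hA' hB'; linarith
        · by_cases k3 : y 3 = 0
          · exfalso; rw [k0,k1,k3] at hA' hB'; linarith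
          · have hv2 : y 2 = 30 := by rw [k0,k1] at hA' hB'; linarith
            have hv3 : y 3 = 30 := by rw [k0,k1] at hA' hB'; linarith
            rw [vec_ext k0 k1 hv2 hv3]; exact memC9_6
      · by_cases k2 : y 2 = 0
        · by_cases k3 : y 3 = 0
          · exfalso; rw [k0,k2,k3] at hA' hB'; linarith
          · exfalso; rw [k0,k2] at hA' hB'; linarith [hpos 1, hpos 3]
        · by_cases k3 : y 3 = 0
          · have hv1 : y 1 = 10 := by rw [k0,k3] at hA' hB'; linarith
            have hv2 : y 2 = 40 := by rw [k0,k3] at hA' hB'; linarith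
            rw [vec_ext k0 hv1 hv2 k3]; exact memC9_7
          · exact absurd ⟨hpos' 1 k1, hpos' 2 k2, hpos' 3 k3⟩ ht0
    · by_cases k1 : y 1 = 0
      · by_cases k2 : y 2 = 0
        · by_cases k3 : y 3 = 0
          · exfalso; rw [k1,k2,k3] at hA' hB'; linarith
          · have hv0 : y 0 = 10 := by rw [k1,k2] at hA' hB'; linarith
            have hv3 : y 3 = 40 := by rw [k1,k2] at hA' hB'; linarith
            rw [vec_ext hv0 k1 k2 hv3]; exact memC9_8
        · by_cases k3 : y 3 = 0
          · exfalso; rw [k1,k3] at hA' hB'; linarith [hpos 0, hpos 2]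
          · exact absurd ⟨hpos' 0 k0, hpos' 2 k2, hpos' 3 k3⟩ ht1
      · by_cases k2 : y 2 = 0
        · by_cases k3 : y 3 = 0
          · have hv0 : y 0 = 15 := by rw [k2,k3] at hA' hB'; linarith
            have hv1 : y 1 = 15 := by rw [k2,k3] at hA' hB'; linarith
            rw [vec_ext hv0 hv1 k2 k3]; exact memC9_5
          · exact absurd ⟨hpos' 0 k0, hpos' 1 k1, hpos' 3 k3⟩ ht2
        · exact absurd ⟨hpos' 0 k0, hpos' 1 k1, hpos' 2 k2⟩ ht3
  · -- A tight, B slack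
    have h01 : y 0 = 0 ∨ y 1 = 0 := by
      by_contra hc
      push_neg at hc
      have hcI : 0 < y 0 := hpos' 0 hc.1
      have hcJ : 0 < y 1 := hpos' 1 hc.2
      obtain ⟨ε, hε, he1, he2, he3⟩ : ∃ ε : ℝ, 0 < ε ∧ ε ≤ y 0 / 1 ∧ ε ≤ y 1 / 5 ∧ ε ≤ ((90 - (y 0 + 5 * y 1 + y 2 + 2 * y 3)) / 24) :=
        ⟨min (min (y 0 / 1) (y 1 / 5)) ((90 - (y 0 + 5 * y 1 + y 2 + 2 * y 3)) / 24), lt_min (lt_min (div_pos hcI (by norm_num)) (div_pos hcJ (by norm_num)))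
        (div_pos (by linarith) (by norm_num)),
         le_trans (min_le_left _ _) (min_le_left _ _),
         le_trans (min_le_left _ _) (min_le_right _ _), min_le_right _ _⟩
      have hplus : y + ε • ![(1:ℝ),-5,0,0] ∈ K0 := by
        refine ⟨fun i => ?_, by simp; linarith, by simp; linarith⟩
        fin_cases i <;> simp <;> linarith [hpos 0, hpos 1, hpos 2, hpos 3]
      have hminus : y - ε • ![(1:ℝ),-5,0,0] ∈ K0 := by
        refine ⟨fun i => ?_, by simp; linarith, by simp; linarith⟩
        fin_cases i <;> simp <;> linarith [hpos 0, hpos 1, hpos 2, hpos 3]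
      exact pert hmid ![(1:ℝ),-5,0,0] ε hε (by intro h; have := congrFun h 0; norm_num at this) hplus hminus
    have h02 : y 0 = 0 ∨ y 2 = 0 := by
      by_contra hc
      push_neg at hc
      have hcI : 0 < y 0 := hpos' 0 hc.1
      have hcJ : 0 < y 2 := hpos' 2 hc.2
      obtain ⟨ε, hε, he1, he2, he3⟩ : ∃ ε : ℝ, 0 < ε ∧ ε ≤ y 0 / 2 ∧ ε ≤ y 2 / 5 ∧ ε ≤ ((90 - (y 0 + 5 * y 1 + y 2 + 2 * y 3)) / 3) :=
        ⟨min (min (y 0 / 2) (y 2 / 5)) ((90 - (y 0 + 5 * y 1 + y 2 + 2 * y 3)) / 3), lt_min (lt_min (div_pos hcI (by norm_num)) (div_pos hcJ (by norm_num)))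
        (div_pos (by linarith) (by norm_num)),
         le_trans (min_le_left _ _) (min_le_left _ _),
         le_trans (min_le_left _ _) (min_le_right _ _), min_le_right _ _⟩
      have hplus : y + ε • ![(2:ℝ),0,-5,0] ∈ K0 := by
        refine ⟨fun i => ?_, by simp; linarith, by simp; linarith⟩
        fin_cases i <;> simp <;> linarith [hpos 0, hpos 1, hpos 2, hpos 3]
      have hminus : y - ε • ![(2:ℝ),0,-5,0] ∈ K0 := by
        refine ⟨fun i => ?_, by simp; linarith, by simp; linarith⟩
        fin_cases i <;> simp <;> linarith [hpos 0, hpos 1, hpos 2, hpos 3]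
      exact pert hmid ![(2:ℝ),0,-5,0] ε hε (by intro h; have := congrFun h 0; norm_num at this) hplus hminus
    have h03 : y 0 = 0 ∨ y 3 = 0 := by
      by_contra hc
      push_neg at hc
      have hcI : 0 < y 0 := hpos' 0 hc.1
      have hcJ : 0 < y 3 := hpos' 3 hc.2
      obtain ⟨ε, hε, he1, he2, he3⟩ : ∃ ε : ℝ, 0 < ε ∧ ε ≤ y 0 / 1 ∧ ε ≤ y 3 / 5 ∧ ε ≤ ((90 - (y 0 + 5 * y 1 + y 2 + 2 * y 3)) / 9) :=
        ⟨min (min (y 0 / 1) (y 3 / 5)) ((90 - (y 0 + 5 * y 1 + y 2 + 2 * y 3)) / 9), lt_min (lt_min (div_pos hcI (by norm_num)) (div_pos hcJ (by norm_num)))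
        (div_pos (by linarith) (by norm_num)),
         le_trans (min_le_left _ _) (min_le_left _ _),
         le_trans (min_le_left _ _) (min_le_right _ _), min_le_right _ _⟩
      have hplus : y + ε • ![(1:ℝ),0,0,-5] ∈ K0 := by
        refine ⟨fun i => ?_, by simp; linarith, by simp; linarith⟩
        fin_cases i <;> simp <;> linarith [hpos 0, hpos 1, hpos 2, hpos 3]
      have hminus : y - ε • ![(1:ℝ),0,0,-5] ∈ K0 := by
        refine ⟨fun i => ?_, by simp; linarith, by simp; linarith⟩
        fin_cases i <;> simp <;> linarith [hpos 0, hpos 1, hpos 2, hpos 3]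
      exact pert hmid ![(1:ℝ),0,0,-5] ε hε (by intro h; have := congrFun h 0; norm_num at this) hplus hminus
    have h12 : y 1 = 0 ∨ y 2 = 0 := by
      by_contra hc
      push_neg at hc
      have hcI : 0 < y 1 := hpos' 1 hc.1
      have hcJ : 0 < y 2 := hpos' 2 hc.2
      obtain ⟨ε, hε, he1, he2, he3⟩ : ∃ ε : ℝ, 0 < ε ∧ ε ≤ y 1 / 2 ∧ ε ≤ y 2 / 1 ∧ ε ≤ ((90 - (y 0 + 5 * y 1 + y 2 + 2 * y 3)) / 9) :=
        ⟨min (min (y 1 / 2) (y 2 / 1)) ((90 - (y 0 + 5 * y 1 + y 2 + 2 * y 3)) / 9), lt_min (lt_min (div_pos hcI (by norm_num)) (div_pos hcJ (by norm_num)))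
        (div_pos (by linarith) (by norm_num)),
         le_trans (min_le_left _ _) (min_le_left _ _),
         le_trans (min_le_left _ _) (min_le_right _ _), min_le_right _ _⟩
      have hplus : y + ε • ![(0:ℝ),2,-1,0] ∈ K0 := by
        refine ⟨fun i => ?_, by simp; linarith, by simp; linarith⟩
        fin_cases i <;> simp <;> linarith [hpos 0, hpos 1, hpos 2, hpos 3]
      have hminus : y - ε • ![(0:ℝ),2,-1,0] ∈ K0 := by
        refine ⟨fun i => ?_, by simp; linarith, by simp; linarith⟩
        fin_cases i <;> simp <;> linarith [hpos 0, hpos 1, hpos 2, hpos 3]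
      exact pert hmid ![(0:ℝ),2,-1,0] ε hε (by intro h; have := congrFun h 1; norm_num at this) hplus hminus
    have h13 : y 1 = 0 ∨ y 3 = 0 := by
      by_contra hc
      push_neg at hc
      have hcI : 0 < y 1 := hpos' 1 hc.1
      have hcJ : 0 < y 3 := hpos' 3 hc.2
      obtain ⟨ε, hε, he1, he2, he3⟩ : ∃ ε : ℝ, 0 < ε ∧ ε ≤ y 1 / 1 ∧ ε ≤ y 3 / 1 ∧ ε ≤ ((90 - (y 0 + 5 * y 1 + y 2 + 2 * y 3)) / 3) :=
        ⟨min (min (y 1 / 1) (y 3 / 1)) ((90 - (y 0 + 5 * y 1 + y 2 + 2 * y 3)) / 3), lt_min (lt_min (div_pos hcI (by norm_num)) (div_pos hcJ (by norm_num)))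
        (div_pos (by linarith) (by norm_num)),
         le_trans (min_le_left _ _) (min_le_left _ _),
         le_trans (min_le_left _ _) (min_le_right _ _), min_le_right _ _⟩
      have hplus : y + ε • ![(0:ℝ),1,0,-1] ∈ K0 := by
        refine ⟨fun i => ?_, by simp; linarith, by simp; linarith⟩
        fin_cases i <;> simp <;> linarith [hpos 0, hpos 1, hpos 2, hpos 3]
      have hminus : y - ε • ![(0:ℝ),1,0,-1] ∈ K0 := by
        refine ⟨fun i => ?_, by simp; linarith, by simp; linarith⟩
        fin_cases i <;> simp <;> linarith [hpos 0, hpos 1, hpos 2, hpos 3]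
      exact pert hmid ![(0:ℝ),1,0,-1] ε hε (by intro h; have := congrFun h 1; norm_num at this) hplus hminus
    have h23 : y 2 = 0 ∨ y 3 = 0 := by
      by_contra hc
      push_neg at hc
      have hcI : 0 < y 2 := hpos' 2 hc.1
      have hcJ : 0 < y 3 := hpos' 3 hc.2
      obtain ⟨ε, hε, he1, he2, he3⟩ : ∃ ε : ℝ, 0 < ε ∧ ε ≤ y 2 / 1 ∧ ε ≤ y 3 / 2 ∧ ε ≤ ((90 - (y 0 + 5 * y 1 + y 2 + 2 * y 3)) / 3) :=
        ⟨min (min (y 2 / 1) (y 3 / 2)) ((90 - (y 0 + 5 * y 1 + y 2 + 2 * y 3)) / 3), lt_min (lt_min (div_pos hcI (by norm_num)) (div_pos hcJ (by norm_num)))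
        (div_pos (by linarith) (by norm_num)),
         le_trans (min_le_left _ _) (min_le_left _ _),
         le_trans (min_le_left _ _) (min_le_right _ _), min_le_right _ _⟩
      have hplus : y + ε • ![(0:ℝ),0,1,-2] ∈ K0 := by
        refine ⟨fun i => ?_, by simp; linarith, by simp; linarith⟩
        fin_cases i <;> simp <;> linarith [hpos 0, hpos 1, hpos 2, hpos 3]
      have hminus : y - ε • ![(0:ℝ),0,1,-2] ∈ K0 := by
        refine ⟨fun i => ?_, by simp; linarith, by simp; linarith⟩
        fin_cases i <;> simp <;> linarith [hpos 0, hpos 1, hpos 2, hpos 3]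
      exact pert hmid ![(0:ℝ),0,1,-2] ε hε (by intro h; have := congrFun h 2; norm_num [Matrix.cons_val_two, Matrix.cons_val_three] at this) hplus hminus
    by_cases k0 : y 0 = 0
    · by_cases k1 : y 1 = 0
      · by_cases k2 : y 2 = 0
        · by_cases k3 : y 3 = 0
          · exfalso; rw [k0,k1,k2,k3] at hA'; norm_num at hA'
          · exfalso; rw [k0,k1,k2] at hA' hB'; linarith
        · have k3 : y 3 = 0 := h23.resolve_left k2
          have hv : y 2 = 45 := by rw [k0,k1,k3] at hA'; linarith
          rw [vec_ext k0 k1 hv k3]; exact memC9_3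
      · have k2 : y 2 = 0 := h12.resolve_left k1
        have k3 : y 3 = 0 := h13.resolve_left k1
        exfalso; rw [k0,k2,k3] at hA' hB'; linarith
    · have k1 : y 1 = 0 := h01.resolve_left k0
      have k2 : y 2 = 0 := h02.resolve_left k0
      have k3 : y 3 = 0 := h03.resolve_left k0
      have hv : y 0 = 18 := by rw [k1,k2,k3] at hA'; linarith
      rw [vec_ext hv k1 k2 k3]; exact memC9_1
  · -- A slack, B tight
    have h01 : y 0 = 0 ∨ y 1 = 0 := by
      by_contra hc
      push_neg at hc
      have hcI : 0 < y 0 := hpos' 0 hc.1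
      have hcJ : 0 < y 1 := hpos' 1 hc.2
      obtain ⟨ε, hε, he1, he2, he3⟩ : ∃ ε : ℝ, 0 < ε ∧ ε ≤ y 0 / 5 ∧ ε ≤ y 1 / 1 ∧ ε ≤ ((90 - (5 * y 0 + y 1 + 2 * y 2 + y 3)) / 24) :=
        ⟨min (min (y 0 / 5) (y 1 / 1)) ((90 - (5 * y 0 + y 1 + 2 * y 2 + y 3)) / 24), lt_min (lt_min (div_pos hcI (by norm_num)) (div_pos hcJ (by norm_num)))
        (div_pos (by linarith) (by norm_num)),
         le_trans (min_le_left _ _) (min_le_left _ _),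
         le_trans (min_le_left _ _) (min_le_right _ _), min_le_right _ _⟩
      have hplus : y + ε • ![(5:ℝ),-1,0,0] ∈ K0 := by
        refine ⟨fun i => ?_, by simp; linarith, by simp; linarith⟩
        fin_cases i <;> simp <;> linarith [hpos 0, hpos 1, hpos 2, hpos 3]
      have hminus : y - ε • ![(5:ℝ),-1,0,0] ∈ K0 := by
        refine ⟨fun i => ?_, by simp; linarith, by simp; linarith⟩
        fin_cases i <;> simp <;> linarith [hpos 0, hpos 1, hpos 2, hpos 3]
      exact pert hmid ![(5:ℝ),-1,0,0] ε hε (by intro h; have := congrFun h 0; norm_num at this) hplus hminus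
    have h02 : y 0 = 0 ∨ y 2 = 0 := by
      by_contra hc
      push_neg at hc
      have hcI : 0 < y 0 := hpos' 0 hc.1
      have hcJ : 0 < y 2 := hpos' 2 hc.2
      obtain ⟨ε, hε, he1, he2, he3⟩ : ∃ ε : ℝ, 0 < ε ∧ ε ≤ y 0 / 1 ∧ ε ≤ y 2 / 1 ∧ ε ≤ ((90 - (5 * y 0 + y 1 + 2 * y 2 + y 3)) / 3) :=
        ⟨min (min (y 0 / 1) (y 2 / 1)) ((90 - (5 * y 0 + y 1 + 2 * y 2 + y 3)) / 3), lt_min (lt_min (div_pos hcI (by norm_num)) (div_pos hcJ (by norm_num)))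
        (div_pos (by linarith) (by norm_num)),
         le_trans (min_le_left _ _) (min_le_left _ _),
         le_trans (min_le_left _ _) (min_le_right _ _), min_le_right _ _⟩
      have hplus : y + ε • ![(1:ℝ),0,-1,0] ∈ K0 := by
        refine ⟨fun i => ?_, by simp; linarith, by simp; linarith⟩
        fin_cases i <;> simp <;> linarith [hpos 0, hpos 1, hpos 2, hpos 3]
      have hminus : y - ε • ![(1:ℝ),0,-1,0] ∈ K0 := by
        refine ⟨fun i => ?_, by simp; linarith, by simp; linarith⟩
        fin_cases i <;> simp <;> linarith [hpos 0, hpos 1, hpos 2, hpos 3]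
      exact pert hmid ![(1:ℝ),0,-1,0] ε hε (by intro h; have := congrFun h 0; norm_num at this) hplus hminus
    have h03 : y 0 = 0 ∨ y 3 = 0 := by
      by_contra hc
      push_neg at hc
      have hcI : 0 < y 0 := hpos' 0 hc.1
      have hcJ : 0 < y 3 := hpos' 3 hc.2
      obtain ⟨ε, hε, he1, he2, he3⟩ : ∃ ε : ℝ, 0 < ε ∧ ε ≤ y 0 / 2 ∧ ε ≤ y 3 / 1 ∧ ε ≤ ((90 - (5 * y 0 + y 1 + 2 * y 2 + y 3)) / 9) :=
        ⟨min (min (y 0 / 2) (y 3 / 1)) ((90 - (5 * y 0 + y 1 + 2 * y 2 + y 3)) / 9), lt_min (lt_min (div_pos hcI (by norm_num)) (div_pos hcJ (by norm_num)))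
        (div_pos (by linarith) (by norm_num)),
         le_trans (min_le_left _ _) (min_le_left _ _),
         le_trans (min_le_left _ _) (min_le_right _ _), min_le_right _ _⟩
      have hplus : y + ε • ![(2:ℝ),0,0,-1] ∈ K0 := by
        refine ⟨fun i => ?_, by simp; linarith, by simp; linarith⟩
        fin_cases i <;> simp <;> linarith [hpos 0, hpos 1, hpos 2, hpos 3]
      have hminus : y - ε • ![(2:ℝ),0,0,-1] ∈ K0 := by
        refine ⟨fun i => ?_, by simp; linarith, by simp; linarith⟩
        fin_cases i <;> simp <;> linarith [hpos 0, hpos 1, hpos 2, hpos 3]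
      exact pert hmid ![(2:ℝ),0,0,-1] ε hε (by intro h; have := congrFun h 0; norm_num at this) hplus hminus
    have h12 : y 1 = 0 ∨ y 2 = 0 := by
      by_contra hc
      push_neg at hc
      have hcI : 0 < y 1 := hpos' 1 hc.1
      have hcJ : 0 < y 2 := hpos' 2 hc.2
      obtain ⟨ε, hε, he1, he2, he3⟩ : ∃ ε : ℝ, 0 < ε ∧ ε ≤ y 1 / 1 ∧ ε ≤ y 2 / 5 ∧ ε ≤ ((90 - (5 * y 0 + y 1 + 2 * y 2 + y 3)) / 9) :=
        ⟨min (min (y 1 / 1) (y 2 / 5)) ((90 - (5 * y 0 + y 1 + 2 * y 2 + y 3)) / 9), lt_min (lt_min (div_pos hcI (by norm_num)) (div_pos hcJ (by norm_num)))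
        (div_pos (by linarith) (by norm_num)),
         le_trans (min_le_left _ _) (min_le_left _ _),
         le_trans (min_le_left _ _) (min_le_right _ _), min_le_right _ _⟩
      have hplus : y + ε • ![(0:ℝ),1,-5,0] ∈ K0 := by
        refine ⟨fun i => ?_, by simp; linarith, by simp; linarith⟩
        fin_cases i <;> simp <;> linarith [hpos 0, hpos 1, hpos 2, hpos 3]
      have hminus : y - ε • ![(0:ℝ),1,-5,0] ∈ K0 := by
        refine ⟨fun i => ?_, by simp; linarith, by simp; linarith⟩
        fin_cases i <;> simp <;> linarith [hpos 0, hpos 1, hpos 2, hpos 3]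
      exact pert hmid ![(0:ℝ),1,-5,0] ε hε (by intro h; have := congrFun h 1; norm_num at this) hplus hminus
    have h13 : y 1 = 0 ∨ y 3 = 0 := by
      by_contra hc
      push_neg at hc
      have hcI : 0 < y 1 := hpos' 1 hc.1
      have hcJ : 0 < y 3 := hpos' 3 hc.2
      obtain ⟨ε, hε, he1, he2, he3⟩ : ∃ ε : ℝ, 0 < ε ∧ ε ≤ y 1 / 2 ∧ ε ≤ y 3 / 5 ∧ ε ≤ ((90 - (5 * y 0 + y 1 + 2 * y 2 + y 3)) / 3) :=
        ⟨min (min (y 1 / 2) (y 3 / 5)) ((90 - (5 * y 0 + y 1 + 2 * y 2 + y 3)) / 3), lt_min (lt_min (div_pos hcI (by norm_num)) (div_pos hcJ (by norm_num)))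
        (div_pos (by linarith) (by norm_num)),
         le_trans (min_le_left _ _) (min_le_left _ _),
         le_trans (min_le_left _ _) (min_le_right _ _), min_le_right _ _⟩
      have hplus : y + ε • ![(0:ℝ),2,0,-5] ∈ K0 := by
        refine ⟨fun i => ?_, by simp; linarith, by simp; linarith⟩
        fin_cases i <;> simp <;> linarith [hpos 0, hpos 1, hpos 2, hpos 3]
      have hminus : y - ε • ![(0:ℝ),2,0,-5] ∈ K0 := by
        refine ⟨fun i => ?_, by simp; linarith, by simp; linarith⟩
        fin_cases i <;> simp <;> linarith [hpos 0, hpos 1, hpos 2, hpos 3]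
      exact pert hmid ![(0:ℝ),2,0,-5] ε hε (by intro h; have := congrFun h 1; norm_num at this) hplus hminus
    have h23 : y 2 = 0 ∨ y 3 = 0 := by
      by_contra hc
      push_neg at hc
      have hcI : 0 < y 2 := hpos' 2 hc.1
      have hcJ : 0 < y 3 := hpos' 3 hc.2
      obtain ⟨ε, hε, he1, he2, he3⟩ : ∃ ε : ℝ, 0 < ε ∧ ε ≤ y 2 / 2 ∧ ε ≤ y 3 / 1 ∧ ε ≤ ((90 - (5 * y 0 + y 1 + 2 * y 2 + y 3)) / 3) :=
        ⟨min (min (y 2 / 2) (y 3 / 1)) ((90 - (5 * y 0 + y 1 + 2 * y 2 + y 3)) / 3), lt_min (lt_min (div_pos hcI (by norm_num)) (div_pos hcJ (by norm_num)))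
        (div_pos (by linarith) (by norm_num)),
         le_trans (min_le_left _ _) (min_le_left _ _),
         le_trans (min_le_left _ _) (min_le_right _ _), min_le_right _ _⟩
      have hplus : y + ε • ![(0:ℝ),0,2,-1] ∈ K0 := by
        refine ⟨fun i => ?_, by simp; linarith, by simp; linarith⟩
        fin_cases i <;> simp <;> linarith [hpos 0, hpos 1, hpos 2, hpos 3]
      have hminus : y - ε • ![(0:ℝ),0,2,-1] ∈ K0 := by
        refine ⟨fun i => ?_, by simp; linarith, by simp; linarith⟩
        fin_cases i <;> simp <;> linarith [hpos 0, hpos 1, hpos 2, hpos 3]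
      exact pert hmid ![(0:ℝ),0,2,-1] ε hε (by intro h; have := congrFun h 2; norm_num [Matrix.cons_val_two, Matrix.cons_val_three] at this) hplus hminus
    by_cases k1 : y 1 = 0
    · by_cases k3 : y 3 = 0
      · by_cases k0 : y 0 = 0
        · by_cases k2 : y 2 = 0
          · exfalso; rw [k0,k1,k2,k3] at hB'; norm_num at hB'
          · exfalso; rw [k0,k1,k3] at hA' hB'; linarith
        · have k2 : y 2 = 0 := h02.resolve_left k0
          exfalso; rw [k1,k2,k3] at hA' hB'; linarith
      · have k0 : y 0 = 0 := h03.resolve_right k3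
        have k2 : y 2 = 0 := h23.resolve_right k3
        have hv : y 3 = 45 := by rw [k0,k1,k2] at hB'; linarith
        rw [vec_ext k0 k1 k2 hv]; exact memC9_4
    · have k0 : y 0 = 0 := h01.resolve_right k1
      have k2 : y 2 = 0 := h12.resolve_left k1
      have k3 : y 3 = 0 := h13.resolve_left k1
      have hv : y 1 = 18 := by rw [k0,k2,k3] at hB'; linarith
      rw [vec_ext k0 hv k2 k3]; exact memC9_2
  · -- both slack
    have hz : ∀ i, y i = 0 := by
      intro i
      by_contra hne
      have hpi : 0 < y i := hpos' i hne
      obtain ⟨ε, hε, he1, he2, he3⟩ : ∃ ε : ℝ, 0 < ε ∧ ε ≤ y i ∧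
          ε ≤ (90 - (5 * y 0 + y 1 + 2 * y 2 + y 3)) / 9 ∧
          ε ≤ (90 - (y 0 + 5 * y 1 + y 2 + 2 * y 3)) / 9 :=
        ⟨min (y i) (min ((90 - (5 * y 0 + y 1 + 2 * y 2 + y 3)) / 9)
            ((90 - (y 0 + 5 * y 1 + y 2 + 2 * y 3)) / 9)),
         lt_min hpi (lt_min (div_pos (by linarith) (by norm_num))
           (div_pos (by linarith) (by norm_num))),
         min_le_left _ _, le_trans (min_le_right _ _) (min_le_left _ _),
         le_trans (min_le_right _ _) (min_le_right _ _)⟩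
      set D : Fin 4 → ℝ := fun j => if j = i then ε else 0 with hDdef
      have hD1 : ∀ j, 0 ≤ D j ∧ D j ≤ ε := by
        intro j; by_cases h : j = i <;> simp [hDdef, h, hε.le]
      have hD2 : ∀ j, D j ≤ y j := by
        intro j; by_cases h : j = i
        · subst h; simp [hDdef]; exact he1
        · simp [hDdef, h]; exact hpos j
      have hplus : y + D ∈ K0 := by
        refine ⟨fun j => ?_, ?_, ?_⟩
        · simp only [Pi.add_apply]; linarith [(hD1 j).1, hpos j]
        · simp only [Pi.add_apply]
          linarith [(hD1 0).1, (hD1 0).2, (hD1 1).1, (hD1 1).2, (hD1 2).1, (hD1 2).2,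
            (hD1 3).1, (hD1 3).2]
        · simp only [Pi.add_apply]
          linarith [(hD1 0).1, (hD1 0).2, (hD1 1).1, (hD1 1).2, (hD1 2).1, (hD1 2).2,
            (hD1 3).1, (hD1 3).2]
      have hminus : y - D ∈ K0 := by
        refine ⟨fun j => ?_, ?_, ?_⟩
        · simp only [Pi.sub_apply]; linarith [hD2 j]
        · simp only [Pi.sub_apply]
          linarith [(hD1 0).1, (hD1 1).1, (hD1 2).1, (hD1 3).1]
        · simp only [Pi.sub_apply]
          linarith [(hD1 0).1, (hD1 1).1, (hD1 2).1, (hD1 3).1]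
      have h := hmid D hplus hminus
      have : D i = 0 := by rw [h]; rfl
      rw [hDdef] at this; simp at this
      exact hε.ne' this
    have : y = 0 := funext hz
    rw [this]; exact memC9_0

end Extreme

section HV

lemma C9_finite : C9.Finite := by
  unfold C9
  exact (Set.finite_singleton _).insert _ |>.insert _ |>.insert _ |>.insert _ |>.insert _
    |>.insert _ |>.insert _ |>.insert _

lemma K0_eq_hull : K0 = convexHull ℝ C9 := by
  apply Set.Subset.antisymm
  · have hKM := closure_convexHull_extremePoints K0_compact K0_convex
    calc K0 = closure (convexHull ℝ (K0.extremePoints ℝ)) := hKM.symm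
    _ ⊆ closure (convexHull ℝ C9) := closure_mono (convexHull_mono extreme_sub)
    _ = convexHull ℝ C9 := IsClosed.closure_eq (C9_finite.isCompact_convexHull ℝ).isClosed
  · exact convexHull_min C9_subset_K0 K0_convex

lemma zero_mem_Qplus4 : (0 : Fin 4 → ℝ) ∈ Qplus4 := by
  have h1 : ![(1:ℝ) * 18, 0, 0, 0] ∈ Qplus4 := Qpts_subset (mem1 (by norm_num [Sgn]))
  have h2 : ![(-1:ℝ) * 18, 0, 0, 0] ∈ Qplus4 := Qpts_subset (mem1 (by norm_num [Sgn]))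
  have hc : Convex ℝ Qplus4 := convex_convexHull ℝ _
  have := hc h1 h2 (by norm_num : (0:ℝ) ≤ 1/2) (by norm_num : (0:ℝ) ≤ 1/2) (by norm_num)
  convert this using 1
  funext i; fin_cases i <;> simp <;> norm_num

lemma C9_image_subset {s : Fin 4 → ℝ} (hs : ∀ i, s i = 1 ∨ s i = -1) :
    ∀ v ∈ C9, Tmap s false v ∈ Qplus4 := by
  intro v hv
  simp only [C9, Set.mem_insert_iff, Set.mem_singleton_iff] at hv
  have hs' : ∀ i, s i ∈ Sgn := fun i => Sgn_iff.mpr (hs i)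
  rcases hv with rfl|rfl|rfl|rfl|rfl|rfl|rfl|rfl|rfl
  · have : Tmap s false (0 : Fin 4 → ℝ) = 0 := by funext i; simp
    rw [this]; exact zero_mem_Qplus4
  · have h : Tmap s false ![18,0,0,0] = ![s 0 * 18, 0, 0, 0] := by
      funext i; fin_cases i <;> simp [swapIdx]
    rw [h]; exact Qpts_subset (mem1 (hs' 0))
  · have h : Tmap s false ![0,18,0,0] = ![0, s 1 * 18, 0, 0] := by
      funext i; fin_cases i <;> simp [swapIdx]
    rw [h]; exact Qpts_subset (mem2 (hs' 1))
  · have h : Tmap s false ![0,0,45,0] = ![0, 0, s 2 * 45, 0] := by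
      funext i; fin_cases i <;> simp [swapIdx]
    rw [h]; exact Qpts_subset (mem3 (hs' 2))
  · have h : Tmap s false ![0,0,0,45] = ![0, 0, 0, s 3 * 45] := by
      funext i; fin_cases i <;> simp [swapIdx]
    rw [h]; exact Qpts_subset (mem4 (hs' 3))
  · have h : Tmap s false ![15,15,0,0] = ![s 0 * 15, s 1 * 15, 0, 0] := by
      funext i; fin_cases i <;> simp [swapIdx]
    rw [h]; exact Qpts_subset (mem5 (hs' 0) (hs' 1))
  · have h : Tmap s false ![0,0,30,30] = ![0, 0, s 2 * 30, s 3 * 30] := by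
      funext i; fin_cases i <;> simp [swapIdx]
    rw [h]; exact Qpts_subset (mem6 (hs' 2) (hs' 3))
  · have h : Tmap s false ![0,10,40,0] = ![0, s 1 * 10, s 2 * 40, 0] := by
      funext i; fin_cases i <;> simp [swapIdx]
    rw [h]; exact Qpts_subset (mem7 (hs' 1) (hs' 2))
  · have h : Tmap s false ![10,0,0,40] = ![s 0 * 10, 0, 0, s 3 * 40] := by
      funext i; fin_cases i <;> simp [swapIdx]
    rw [h]; exact Qpts_subset (mem8 (hs' 0) (hs' 3))

/-- key step: every point satisfying the 32 inequalities lies in `Q⁺`. -/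
lemma key_mem {x : Fin 4 → ℝ} (hx : ∀ w ∈ Wplus, ∑ i, w i * x i ≤ 90) : x ∈ Qplus4 := by
  classical
  set σ : Fin 4 → ℝ := fun i => if x i < 0 then -1 else 1 with hσdef
  have hσ : ∀ i, σ i = 1 ∨ σ i = -1 := by
    intro i; by_cases h : x i < 0 <;> simp [hσdef, h]
  have hynn : ∀ i, 0 ≤ σ i * x i := by
    intro i; by_cases h : x i < 0
    · simp [hσdef, h]; linarith
    · simp [hσdef, h]; linarith [not_lt.mp h]
  set y : Fin 4 → ℝ := fun i => σ i * x i with hydef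
  have hyA : 5 * y 0 + y 1 + 2 * y 2 + y 3 ≤ 90 := by
    have hw : ![5 * σ 0, σ 1, 2 * σ 2, σ 3] ∈ Wplus := ⟨σ, hσ, Or.inl rfl⟩
    have := hx _ hw
    rw [Fin.sum_univ_four] at this
    simp only [Matrix.cons_val_zero, Matrix.cons_val_one, Matrix.head_cons] at this
    rw [hydef]; simp only []
    calc 5 * (σ 0 * x 0) + σ 1 * x 1 + 2 * (σ 2 * x 2) + σ 3 * x 3
        = 5 * σ 0 * x 0 + σ 1 * x 1 + 2 * σ 2 * x 2 + σ 3 * x 3 := by ring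
    _ ≤ 90 := by convert this using 2 <;> simp [Matrix.vecHead, Matrix.vecTail] <;> ring
  have hyB : y 0 + 5 * y 1 + y 2 + 2 * y 3 ≤ 90 := by
    have hw : ![σ 0, 5 * σ 1, σ 2, 2 * σ 3] ∈ Wplus := ⟨σ, hσ, Or.inr rfl⟩
    have := hx _ hw
    rw [Fin.sum_univ_four] at this
    simp only [Matrix.cons_val_zero, Matrix.cons_val_one, Matrix.head_cons] at this
    rw [hydef]; simp only []
    calc σ 0 * x 0 + 5 * (σ 1 * x 1) + σ 2 * x 2 + 2 * (σ 3 * x 3)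
        = σ 0 * x 0 + 5 * σ 1 * x 1 + σ 2 * x 2 + 2 * σ 3 * x 3 := by ring
    _ ≤ 90 := by convert this using 2 <;> simp [Matrix.vecHead, Matrix.vecTail] <;> ring
  have hyK : y ∈ K0 := ⟨hynn, hyA, hyB⟩
  rw [K0_eq_hull] at hyK
  have himg : Tmap σ false y ∈ Tmap σ false '' convexHull ℝ C9 := ⟨y, hyK, rfl⟩
  have hxy : Tmap σ false y = x := by
    funext i
    simp only [Tmap_apply, if_neg Bool.false_ne_true]
    rw [hydef]
    simp only []
    rw [← mul_assoc, sq_one_of_pm (hσ i), one_mul]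
  have hsub : Tmap σ false '' convexHull ℝ C9 ⊆ Qplus4 := by
    rw [(Tmap σ false).image_convexHull]
    apply convexHull_min
    · rintro _ ⟨v, hv, rfl⟩; exact C9_image_subset hσ v hv
    · exact convex_convexHull ℝ _
  rw [← hxy]
  exact hsub himg

/-- Part 4 of the statement. -/
lemma Qplus4_eq_solset : Qplus4 = {x | ∀ w ∈ Wplus, ∑ i, w i * x i ≤ 90} := by
  apply Set.Subset.antisymm
  · intro x hx w hw; exact valid_on_Q hw x hx
  · intro x hx; exact key_mem hx

end HV

section G0

def Gface (w : Fin 4 → ℝ) : Set (Fin 4 → ℝ) := {x ∈ Qplus4 | ∑ i, w i * x i = 90}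

lemma w0_mem_Wplus : w0 ∈ Wplus :=
  ⟨fun _ => 1, fun _ => Or.inl rfl, Or.inl (by funext i; fin_cases i <;> norm_num [w0])⟩

lemma mem_Q_v1 : ![(18:ℝ),0,0,0] ∈ Qplus4 := by
  have := Qpts_subset (mem1 (a := 1) (by norm_num [Sgn])); simpa using this
lemma mem_Q_v2 : ![(0:ℝ),0,45,0] ∈ Qplus4 := by
  have := Qpts_subset (mem3 (a := 1) (by norm_num [Sgn])); simpa using this
lemma mem_Q_v3 : ![(15:ℝ),15,0,0] ∈ Qplus4 := by
  have := Qpts_subset (mem5 (a := 1) (b := 1) (by norm_num [Sgn]) (by norm_num [Sgn]))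
  simpa using this
lemma mem_Q_v6 : ![(10:ℝ),0,0,40] ∈ Qplus4 := by
  have := Qpts_subset (mem8 (a := 1) (b := 1) (by norm_num [Sgn]) (by norm_num [Sgn]))
  simpa using this

lemma mem_G0_v1 : ![(18:ℝ),0,0,0] ∈ Gface w0 :=
  ⟨mem_Q_v1, by norm_num [Fin.sum_univ_four, w0, Matrix.cons_val_two, Matrix.cons_val_three]⟩
lemma mem_G0_v2 : ![(0:ℝ),0,45,0] ∈ Gface w0 :=
  ⟨mem_Q_v2, by norm_num [Fin.sum_univ_four, w0, Matrix.cons_val_two, Matrix.cons_val_three]⟩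
lemma mem_G0_v3 : ![(15:ℝ),15,0,0] ∈ Gface w0 :=
  ⟨mem_Q_v3, by norm_num [Fin.sum_univ_four, w0, Matrix.cons_val_two, Matrix.cons_val_three]⟩
lemma mem_G0_v6 : ![(10:ℝ),0,0,40] ∈ Gface w0 :=
  ⟨mem_Q_v6, by norm_num [Fin.sum_univ_four, w0, Matrix.cons_val_two, Matrix.cons_val_three]⟩

lemma G0_eq_argmax : Gface w0 = {x ∈ Qplus4 | ∀ y ∈ Qplus4, lfun w0 y ≤ lfun w0 x} := by
  ext x
  constructor
  · rintro ⟨hxQ, hx90⟩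
    exact ⟨hxQ, fun y hy => le_trans (valid_on_Q w0_mem_Wplus y hy) (by simp [hx90])⟩
  · rintro ⟨hxQ, hmax⟩
    refine ⟨hxQ, le_antisymm (valid_on_Q w0_mem_Wplus x hxQ) ?_⟩
    have h1 := hmax _ mem_Q_v1
    have h2 : lfun w0 ![(18:ℝ),0,0,0] = 90 := by norm_num [Fin.sum_univ_four, w0, Matrix.cons_val_two, Matrix.cons_val_three]
    rw [h2] at h1
    exact h1

lemma face_G0 : IsFaceOf (Gface w0) Qplus4 := ⟨lfun w0, G0_eq_argmax⟩

lemma lfun_w0_surj : Function.Surjective (lfun w0) := by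
  intro r
  refine ⟨![r/5, 0, 0, 0], ?_⟩
  simp [Fin.sum_univ_four, w0]
  ring

lemma finrank_ker_w0 : Module.finrank ℝ (LinearMap.ker (lfun w0)) = 3 := by
  have h1 := LinearMap.finrank_range_add_finrank_ker (lfun w0)
  rw [LinearMap.range_eq_top.mpr lfun_w0_surj] at h1
  simp only [finrank_top, Module.finrank_self, Module.finrank_pi, Fintype.card_fin] at h1
  omega

lemma vs_G0_le_ker : vectorSpan ℝ (Gface w0) ≤ LinearMap.ker (lfun w0) := by
  rw [vectorSpan_def]
  apply Submodule.span_le.mpr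
  rintro d hd
  rw [Set.mem_vsub] at hd
  obtain ⟨a, ha, b, hb, rfl⟩ := hd
  rw [SetLike.mem_coe, LinearMap.mem_ker]
  have : (a -ᵥ b : Fin 4 → ℝ) = a - b := rfl
  rw [this, map_sub]
  have h90a : lfun w0 a = 90 := ha.2
  have h90b : lfun w0 b = 90 := hb.2
  rw [h90a, h90b, sub_self]

lemma li3 : LinearIndependent ℝ
    ![![(-3:ℝ),15,0,0], ![-18,0,45,0], ![-8,0,0,40]] := by
  rw [Fintype.linearIndependent_iff]
  intro g hg
  have h1 := congrFun hg 1
  have h2 := congrFun hg 2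
  have h3 := congrFun hg 3
  simp [Fin.sum_univ_three, Matrix.vecHead, Matrix.vecTail] at h1 h2 h3
  intro j; fin_cases j <;> simp <;> linarith

lemma adim_G0 : adim (Gface w0) = 3 := by
  unfold adim
  apply le_antisymm
  · have := Submodule.finrank_mono vs_G0_le_ker
    rwa [finrank_ker_w0] at this
  · have hsub : Set.range ![![(-3:ℝ),15,0,0], ![-18,0,45,0], ![-8,0,0,40]]
        ⊆ (vectorSpan ℝ (Gface w0) : Set (Fin 4 → ℝ)) := by
      rintro _ ⟨i, rfl⟩
      fin_cases i
      · have h : ![(-3:ℝ),15,0,0] = ![(15:ℝ),15,0,0] -ᵥ ![(18:ℝ),0,0,0] := by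
          funext j; fin_cases j <;> norm_num
        rw [h]; exact vsub_mem_vectorSpan ℝ mem_G0_v3 mem_G0_v1
      · have h : ![(-18:ℝ),0,45,0] = ![(0:ℝ),0,45,0] -ᵥ ![(18:ℝ),0,0,0] := by
          funext j; fin_cases j <;> norm_num
        rw [h]; exact vsub_mem_vectorSpan ℝ mem_G0_v2 mem_G0_v1
      · have h : ![(-8:ℝ),0,0,40] = ![(10:ℝ),0,0,40] -ᵥ ![(18:ℝ),0,0,0] := by
          funext j; fin_cases j <;> norm_num
        rw [h]; exact vsub_mem_vectorSpan ℝ mem_G0_v6 mem_G0_v1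
    have hle := Submodule.span_le.mpr hsub
    have := Submodule.finrank_mono hle
    rw [finrank_span_eq_card li3] at this
    simpa using this

lemma facet_G0 : IsFacetOf (Gface w0) Qplus4 :=
  ⟨face_G0, by rw [adim_G0, adim_Qplus4]⟩

end G0

section Transport

lemma exists_T {w : Fin 4 → ℝ} (hw : w ∈ Wplus) : ∃ (s : Fin 4 → ℝ) (sw : Bool),
    (∀ i, s i = 1 ∨ s i = -1) ∧ ∀ x, ∑ i, w i * x i = ∑ i, w0 i * (Tmap s sw x) i := by
  obtain ⟨e, he, hw⟩ := hw
  rcases hw with rfl | rfl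
  · refine ⟨e, false, he, fun x => ?_⟩
    rw [Fin.sum_univ_four, Fin.sum_univ_four]
    simp [w0, swapIdx]
    ring
  · refine ⟨fun i => e (swapIdx i), true, fun i => he _, fun x => ?_⟩
    rw [Fin.sum_univ_four, Fin.sum_univ_four]
    simp [w0, swapIdx]
    ring

lemma mem_Q_iff_Tmap {s : Fin 4 → ℝ} {sw : Bool} (hs : ∀ i, s i = 1 ∨ s i = -1)
    (x : Fin 4 → ℝ) : x ∈ Qplus4 ↔ Tmap s sw x ∈ Qplus4 := by
  constructor
  · intro hx
    rw [← Tmap_image_Qplus4 (s := s) (sw := sw) hs]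
    exact ⟨x, hx, rfl⟩
  · intro hx
    rw [← Tmap_inv s sw hs x, ← Tmap_image_Qplus4 (s := invSigns s sw) (sw := sw) (invSigns_pm sw hs)]
    exact ⟨_, hx, rfl⟩

lemma Tmap_surj {s : Fin 4 → ℝ} {sw : Bool} (hs : ∀ i, s i = 1 ∨ s i = -1) :
    Function.Surjective (Tmap s sw) := fun y => ⟨Tmap (invSigns s sw) sw y, Tmap_inv' s sw hs y⟩

lemma preimage_eq_inv_image {s : Fin 4 → ℝ} {sw : Bool} (hs : ∀ i, s i = 1 ∨ s i = -1)
    (S : Set (Fin 4 → ℝ)) : Tmap s sw ⁻¹' S = Tmap (invSigns s sw) sw '' S := by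
  ext x
  constructor
  · intro hx; exact ⟨Tmap s sw x, hx, Tmap_inv s sw hs x⟩
  · rintro ⟨z, hz, rfl⟩
    have h : Tmap s sw (Tmap (invSigns s sw) sw z) = z := Tmap_inv' s sw hs z
    simpa [Set.mem_preimage, h] using hz

lemma Gface_preimage {w : Fin 4 → ℝ} {s : Fin 4 → ℝ} {sw : Bool}
    (hs : ∀ i, s i = 1 ∨ s i = -1)
    (hkey : ∀ x, ∑ i, w i * x i = ∑ i, w0 i * (Tmap s sw x) i) :
    Gface w = Tmap s sw ⁻¹' Gface w0 := by
  ext x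
  simp only [Gface, Set.mem_setOf_eq, Set.mem_preimage]
  rw [hkey x]
  exact and_congr (mem_Q_iff_Tmap hs x) Iff.rfl

lemma vsub_image (f : (Fin 4 → ℝ) →ₗ[ℝ] (Fin 4 → ℝ)) (S : Set (Fin 4 → ℝ)) :
    (f '' S) -ᵥ (f '' S) = f '' (S -ᵥ S) := by
  ext d
  simp only [Set.mem_vsub, Set.mem_image]
  constructor
  · rintro ⟨_, ⟨a, ha, rfl⟩, _, ⟨b, hb, rfl⟩, rfl⟩
    exact ⟨a - b, ⟨a, ha, b, hb, rfl⟩, map_sub f a b⟩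
  · rintro ⟨d', ⟨a, ha, b, hb, rfl⟩, rfl⟩
    exact ⟨f a, ⟨a, ha, rfl⟩, f b, ⟨b, hb, rfl⟩, (map_sub f a b).symm⟩

lemma adim_Tmap_image {s : Fin 4 → ℝ} {sw : Bool} (hs : ∀ i, s i = 1 ∨ s i = -1)
    (S : Set (Fin 4 → ℝ)) : adim (Tmap s sw '' S) = adim S := by
  unfold adim
  rw [vectorSpan_def, vectorSpan_def, vsub_image, Submodule.span_image]
  let e : (Fin 4 → ℝ) ≃ₗ[ℝ] (Fin 4 → ℝ) :=
    LinearEquiv.ofLinear (Tmap s sw) (Tmap (invSigns s sw) sw)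
      (LinearMap.ext (Tmap_inv' s sw hs)) (LinearMap.ext (Tmap_inv s sw hs))
  exact LinearEquiv.finrank_map_eq e _

lemma adim_Gw {w : Fin 4 → ℝ} (hw : w ∈ Wplus) : adim (Gface w) = 3 := by
  obtain ⟨s, sw, hs, hkey⟩ := exists_T hw
  rw [Gface_preimage hs hkey, preimage_eq_inv_image hs,
    adim_Tmap_image (invSigns_pm sw hs), adim_G0]

lemma face_Gw {w : Fin 4 → ℝ} (hw : w ∈ Wplus) : IsFaceOf (Gface w) Qplus4 := by
  obtain ⟨s, sw, hs, hkey⟩ := exists_T hw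
  refine ⟨(lfun w0).comp (Tmap s sw), ?_⟩
  ext x
  simp only [Gface, Set.mem_setOf_eq, LinearMap.comp_apply]
  constructor
  · rintro ⟨hxQ, hx90⟩
    refine ⟨hxQ, fun y hy => ?_⟩
    have h1 : Tmap s sw y ∈ Qplus4 := (mem_Q_iff_Tmap hs y).mp hy
    have h2 := valid_on_Q w0_mem_Wplus _ h1
    have h3 : lfun w0 (Tmap s sw x) = 90 := by
      rw [lfun_apply, ← hkey x]; exact hx90
    rw [h3]; simpa using h2
  · rintro ⟨hxQ, hmax⟩
    refine ⟨hxQ, ?_⟩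
    rw [hkey x]
    have hTx : Tmap s sw x ∈ Qplus4 := (mem_Q_iff_Tmap hs x).mp hxQ
    have hle := valid_on_Q w0_mem_Wplus _ hTx
    have hv1' : Tmap (invSigns s sw) sw ![(18:ℝ),0,0,0] ∈ Qplus4 := by
      rw [← Tmap_image_Qplus4 (s := invSigns s sw) (sw := sw) (invSigns_pm sw hs)]
      exact ⟨_, mem_Q_v1, rfl⟩
    have h5 := hmax _ hv1'
    have h6 : lfun w0 (Tmap s sw (Tmap (invSigns s sw) sw ![(18:ℝ),0,0,0])) = 90 := by
      rw [Tmap_inv' s sw hs]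
      norm_num [Fin.sum_univ_four, w0, Matrix.cons_val_two, Matrix.cons_val_three]
    rw [h6] at h5
    exact le_antisymm hle h5

lemma facet_Gw {w : Fin 4 → ℝ} (hw : w ∈ Wplus) : IsFacetOf (Gface w) Qplus4 :=
  ⟨face_Gw hw, by rw [adim_Gw hw, adim_Qplus4]⟩

end Transport

section Wfin

def bsgn (b : Bool) : ℝ := if b then 1 else -1

lemma bsgn_pm (b : Bool) : bsgn b = 1 ∨ bsgn b = -1 := by cases b <;> simp [bsgn]

def fW (p : (Fin 4 → Bool) × Bool) : Fin 4 → ℝ :=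
  if p.2 then ![bsgn (p.1 0), 5 * bsgn (p.1 1), bsgn (p.1 2), 2 * bsgn (p.1 3)]
  else ![5 * bsgn (p.1 0), bsgn (p.1 1), 2 * bsgn (p.1 2), bsgn (p.1 3)]

lemma fW_mem_Wplus (p : (Fin 4 → Bool) × Bool) : fW p ∈ Wplus := by
  refine ⟨fun i => bsgn (p.1 i), fun i => bsgn_pm _, ?_⟩
  rcases p with ⟨b, br⟩
  cases br
  · left; simp [fW]
  · right; simp [fW]

lemma Wplus_eq_range : Wplus = Set.range fW := by
  classical
  ext w
  constructor
  · rintro ⟨e, he, hw⟩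
    refine ⟨⟨fun i => decide (e i = 1), decide (w = ![e 0, 5 * e 1, e 2, 2 * e 3])⟩, ?_⟩
    have hb : ∀ i, bsgn (decide (e i = 1)) = e i := by
      intro i
      rcases he i with h | h <;> rw [h]
      · rw [decide_eq_true (by norm_num : (1:ℝ) = 1)]; norm_num [bsgn]
      · rw [decide_eq_false (by norm_num : ¬((-1:ℝ) = 1))]; norm_num [bsgn]
    rcases hw with rfl | rfl
    · by_cases hcase : ![5 * e 0, e 1, 2 * e 2, e 3] = ![e 0, 5 * e 1, e 2, 2 * e 3]
      · -- degenerate: both representations; then entries force e values impossible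
        exfalso
        have h0 := congrFun hcase 0
        simp at h0
        rcases he 0 with h|h <;> rw [h] at h0 <;> norm_num at h0
      · rw [decide_eq_false hcase]
        simp only [fW, if_neg Bool.false_ne_true]
        funext i; fin_cases i <;> simp [hb]
    · rw [decide_eq_true rfl]
      simp only [fW, if_pos rfl]
      funext i; fin_cases i <;> simp [hb]
  · rintro ⟨p, rfl⟩
    exact fW_mem_Wplus p

lemma bsgn_inj : Function.Injective bsgn := by
  intro a b h; cases a <;> cases b <;> simp [bsgn] at h ⊢ <;> norm_num at h

lemma fW_inj : Function.Injective fW := by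
  rintro ⟨b, br⟩ ⟨b', br'⟩ h
  have h0 := congrFun h 0
  have h1 := congrFun h 1
  have h2 := congrFun h 2
  have h3 := congrFun h 3
  cases br <;> cases br' <;> simp [fW] at h0 h1 h2 h3
  · exact Prod.ext (funext fun i => by
      fin_cases i <;> [exact bsgn_inj h0; exact bsgn_inj h1; exact bsgn_inj h2; exact bsgn_inj h3]) rfl
  · exfalso; rcases bsgn_pm (b 0) with h|h <;> rcases bsgn_pm (b' 0) with h'|h' <;>
      rw [h, h'] at h0 <;> norm_num at h0
  · exfalso; rcases bsgn_pm (b 0) with h|h <;> rcases bsgn_pm (b' 0) with h'|h' <;>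
      rw [h, h'] at h0 <;> norm_num at h0
  · exact Prod.ext (funext fun i => by
      fin_cases i <;> [exact bsgn_inj h0; exact bsgn_inj h1; exact bsgn_inj h2; exact bsgn_inj h3]) rfl

lemma Wplus_ncard : Wplus.ncard = 32 := by
  rw [Wplus_eq_range, ← Set.image_univ, Set.ncard_image_of_injective _ fW_inj,
    Set.ncard_univ, Nat.card_eq_fintype_card]
  simp

lemma Wplus_finite : Wplus.Finite := by
  rw [Wplus_eq_range]; exact Set.finite_range fW

end Wfin

section Part5

lemma part5 {w w' : Fin 4 → ℝ} (hw : w ∈ Wplus) (hw' : w' ∈ Wplus) :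
    ∃ T ∈ SymGrp, T '' Qplus4 = Qplus4 ∧ T '' Gface w = Gface w' := by
  obtain ⟨s, sw, hs, hkey⟩ := exists_T hw
  obtain ⟨s', sw', hs', hkey'⟩ := exists_T hw'
  have hs2 : ∀ i, invSigns s' sw' i = 1 ∨ invSigns s' sw' i = -1 := invSigns_pm sw' hs'
  have hu : ∀ i, (fun i => invSigns s' sw' i * s (if sw' then swapIdx i else i)) i = 1 ∨
      (fun i => invSigns s' sw' i * s (if sw' then swapIdx i else i)) i = -1 := by
    intro i
    rcases hs2 i with h1|h1 <;> rcases hs (if sw' then swapIdx i else i) with h2|h2 <;>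
      simp [h1, h2]
  have hfun : ⇑(Tmap (fun i => invSigns s' sw' i * s (if sw' then swapIdx i else i)) (xor sw' sw))
      = ⇑(Tmap (invSigns s' sw') sw') ∘ ⇑(Tmap s sw) :=
    funext fun x => (Tmap_comp (invSigns s' sw') s sw' sw x).symm
  refine ⟨_, Tmap_mem_SymGrp _ (xor sw' sw) hu, ?_, ?_⟩
  · rw [hfun, Set.image_comp, Tmap_image_Qplus4 hs, Tmap_image_Qplus4 hs2]
  · rw [hfun, Set.image_comp, Gface_preimage hs hkey,
      Set.image_preimage_eq _ (Tmap_surj hs), Gface_preimage hs' hkey',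
      preimage_eq_inv_image hs']

end Part5

section Classify

set_option maxHeartbeats 1000000 in
lemma classify {F : Set (Fin 4 → ℝ)} (hF : IsFacetOf F Qplus4) :
    ∃ w ∈ Wplus, F = Gface w := by
  classical
  obtain ⟨⟨l, hFl⟩, hdim⟩ := hF
  rw [adim_Qplus4] at hdim
  have hdim3 : adim F = 3 := by omega
  have hne : F.Nonempty := by
    rcases Set.eq_empty_or_nonempty F with h | h
    · exfalso
      rw [h] at hdim3; unfold adim at hdim3; rw [vectorSpan_empty] at hdim3
      simp at hdim3
    · exact h
  obtain ⟨x₀, hx₀⟩ := hne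
  have hx₀Q : x₀ ∈ Qplus4 := by rw [hFl] at hx₀; exact hx₀.1
  have hbound : ∀ y ∈ Qplus4, l y ≤ l x₀ := by rw [hFl] at hx₀; exact hx₀.2
  have hFm : ∀ x, x ∈ F ↔ x ∈ Qplus4 ∧ l x = l x₀ := by
    intro x
    rw [hFl]; simp only [Set.mem_setOf_eq]
    constructor
    · rintro ⟨hxQ, hmax⟩
      exact ⟨hxQ, le_antisymm (hbound x hxQ) (hmax x₀ hx₀Q)⟩
    · rintro ⟨hxQ, hlx⟩
      exact ⟨hxQ, fun y hy => le_trans (hbound y hy) (le_of_eq hlx.symm)⟩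
  have hFsubQ : F ⊆ Qplus4 := fun x hx => ((hFm x).mp hx).1
  have hconvF : Convex ℝ F := by
    have hFi : F = Qplus4 ∩ {x | l x = l x₀} := by
      ext x; rw [hFm]; exact Iff.rfl
    rw [hFi]
    exact (convex_convexHull ℝ _).inter (convex_hyperplane l.isLinear _)
  have hexw : ∃ w ∈ Wplus, ∀ x ∈ F, ∑ i, w i * x i = 90 := by
    by_contra hno
    push_neg at hno
    have hch : ∀ p : (Fin 4 → Bool) × Bool, ∃ x, x ∈ F ∧ ∑ i, fW p i * x i < 90 := by
      intro p
      obtain ⟨x, hxF, hx90⟩ := hno _ (fW_mem_Wplus p)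
      exact ⟨x, hxF, lt_of_le_of_ne (valid_on_Q (fW_mem_Wplus p) x (hFsubQ hxF)) hx90⟩
    choose yc hycF hyc90 using hch
    have hcard : (Finset.univ : Finset ((Fin 4 → Bool) × Bool)).card = 32 := by simp
    set z : Fin 4 → ℝ := ∑ p : (Fin 4 → Bool) × Bool, (32:ℝ)⁻¹ • yc p with hzdef
    have hzF : z ∈ F := by
      apply hconvF.sum_mem (fun p _ => by norm_num) ?_ (fun p _ => hycF p)
      rw [Finset.sum_const, hcard]; norm_num
    have hzQ : z ∈ Qplus4 := hFsubQ hzF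
    have hzlt : ∀ p : (Fin 4 → Bool) × Bool, lfun (fW p) z < 90 := by
      intro p₀
      have hlin : lfun (fW p₀) z = ∑ p : (Fin 4 → Bool) × Bool, (32:ℝ)⁻¹ * lfun (fW p₀) (yc p) := by
        rw [hzdef, map_sum]
        exact Finset.sum_congr rfl fun p _ => by rw [map_smul]; simp
      have hsum : ∑ p : (Fin 4 → Bool) × Bool, (32:ℝ)⁻¹ * lfun (fW p₀) (yc p)
          < ∑ _p : (Fin 4 → Bool) × Bool, (32:ℝ)⁻¹ * 90 := by
        apply Finset.sum_lt_sum
        · intro p _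
          have h1 : lfun (fW p₀) (yc p) ≤ 90 := by
            simpa using valid_on_Q (fW_mem_Wplus p₀) _ (hFsubQ (hycF p))
          nlinarith
        · refine ⟨p₀, Finset.mem_univ _, ?_⟩
          have h2 : lfun (fW p₀) (yc p₀) < 90 := by simpa using hyc90 p₀
          nlinarith
      rw [Finset.sum_const, hcard] at hsum
      rw [hlin]
      calc _ < (32 : ℕ) • ((32:ℝ)⁻¹ * 90) := hsum
      _ = 90 := by norm_num
    have hlne : ∃ u, l u ≠ 0 := by
      by_contra hno2
      push_neg at hno2
      have hl0 : l = 0 := LinearMap.ext fun u => hno2 u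
      have hFQ : F = Qplus4 := by
        ext x; rw [hFm x, hl0]; simp
      rw [hFQ, adim_Qplus4] at hdim3; norm_num at hdim3
    obtain ⟨u₀, hu₀⟩ := hlne
    have hlu : ∃ u, 0 < l u := by
      rcases lt_or_gt_of_ne hu₀ with h | h
      · exact ⟨-u₀, by rw [map_neg]; linarith⟩
      · exact ⟨u₀, h⟩
    obtain ⟨u, hlu⟩ := hlu
    set εf : ((Fin 4 → Bool) × Bool) → ℝ := fun p => (90 - lfun (fW p) z) / (1 + |lfun (fW p) u|)
      with hεf
    set ε := Finset.univ.inf' Finset.univ_nonempty εf with hεdef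
    have hε0 : 0 < ε := by
      rw [hεdef, Finset.lt_inf'_iff]
      intro p _
      exact div_pos (by linarith [hzlt p]) (by positivity)
    have hmemQ : z + ε • u ∈ Qplus4 := by
      rw [Qplus4_eq_solset]
      intro w hw
      rw [Wplus_eq_range] at hw
      obtain ⟨p, rfl⟩ := hw
      have h1 : ∑ i, fW p i * (z + ε • u) i = lfun (fW p) z + ε * lfun (fW p) u := by
        rw [← lfun_apply, map_add, map_smul]; simp
      rw [h1]
      have h2 : ε ≤ εf p := Finset.inf'_le _ (Finset.mem_univ p)
      rw [hεf] at h2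
      have h3 : ε * (1 + |lfun (fW p) u|) ≤ 90 - lfun (fW p) z :=
        (le_div_iff₀ (by positivity)).mp h2
      have h4 : ε * lfun (fW p) u ≤ ε * (1 + |lfun (fW p) u|) :=
        mul_le_mul_of_nonneg_left (by nlinarith [le_abs_self (lfun (fW p) u)]) hε0.le
      linarith
    have h5 := hbound _ hmemQ
    rw [map_add, map_smul] at h5
    have hzl : l z = l x₀ := ((hFm z).mp hzF).2
    simp only [smul_eq_mul] at h5
    nlinarith
  obtain ⟨w, hwW, hw90⟩ := hexw
  refine ⟨w, hwW, ?_⟩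
  have hsubG : F ⊆ Gface w := fun x hx => ⟨hFsubQ hx, hw90 x hx⟩
  have hvs_eq : vectorSpan ℝ F = vectorSpan ℝ (Gface w) := by
    apply Submodule.eq_of_le_of_finrank_le (vectorSpan_mono ℝ hsubG)
    have h1 : Module.finrank ℝ (vectorSpan ℝ (Gface w)) = 3 := adim_Gw hwW
    have h2 : Module.finrank ℝ (vectorSpan ℝ F) = 3 := hdim3
    rw [h1, h2]
  have hker : vectorSpan ℝ F ≤ LinearMap.ker l := by
    rw [vectorSpan_def]
    apply Submodule.span_le.mpr
    rintro d hd
    rw [Set.mem_vsub] at hd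
    obtain ⟨a, ha, b, hb, rfl⟩ := hd
    rw [SetLike.mem_coe, LinearMap.mem_ker]
    have hab : (a -ᵥ b : Fin 4 → ℝ) = a - b := rfl
    rw [hab, map_sub, ((hFm a).mp ha).2, ((hFm b).mp hb).2, sub_self]
  apply Set.Subset.antisymm hsubG
  intro y hy
  rw [hFm y]
  refine ⟨hy.1, ?_⟩
  have hdm : y -ᵥ x₀ ∈ vectorSpan ℝ (Gface w) := vsub_mem_vectorSpan ℝ hy (hsubG hx₀)
  rw [← hvs_eq] at hdm
  have hk := hker hdm
  rw [LinearMap.mem_ker] at hk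
  have hsubv : (y -ᵥ x₀ : Fin 4 → ℝ) = y - x₀ := rfl
  rw [hsubv, map_sub, sub_eq_zero] at hk
  exact hk

end Classify

section Inj

lemma pm_eq {a b : ℝ} (ha : a = 1 ∨ a = -1) (hb : b = 1 ∨ b = -1) (h : a * b = 1) : a = b := by
  rcases ha with rfl|rfl <;> rcases hb with rfl|rfl <;> revert h <;> norm_num

lemma pm_not5 {a b : ℝ} (ha : a = 1 ∨ a = -1) (hb : b = 1 ∨ b = -1) (h : a * b = 5) : False := by
  rcases ha with rfl|rfl <;> rcases hb with rfl|rfl <;> norm_num at h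

set_option maxHeartbeats 1000000 in
lemma Gface_injOn : Set.InjOn Gface Wplus := by
  rintro w hw w' hw' hG
  obtain ⟨e, he, hwe⟩ := hw
  obtain ⟨e', he', hwe'⟩ := hw'
  have sq : ∀ i : Fin 4, e i * e i = 1 := fun i => sq_one_of_pm (he i)
  have sq' : ∀ i : Fin 4, e' i * e' i = 1 := fun i => sq_one_of_pm (he' i)
  have hSgn : ∀ i, e i ∈ Sgn := fun i => Sgn_iff.mpr (he i)
  rcases hwe with rfl | rfl <;> rcases hwe' with rfl | rfl
  · -- both branch 1
    have hva : ![e 0 * 18, 0, 0, 0] ∈ Gface ![5 * e 0, e 1, 2 * e 2, e 3] :=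
      ⟨Qpts_subset (mem1 (hSgn 0)), (by rw [Fin.sum_univ_four]; simp; linear_combination (90:ℝ) * sq 0)⟩
    have hvb : ![e 0 * 15, e 1 * 15, 0, 0] ∈ Gface ![5 * e 0, e 1, 2 * e 2, e 3] :=
      ⟨Qpts_subset (mem5 (hSgn 0) (hSgn 1)), (by rw [Fin.sum_univ_four]; simp; linear_combination (75:ℝ) * sq 0 + 15 * sq 1)⟩
    have hvc : ![0, 0, e 2 * 45, 0] ∈ Gface ![5 * e 0, e 1, 2 * e 2, e 3] :=
      ⟨Qpts_subset (mem3 (hSgn 2)), (by rw [Fin.sum_univ_four]; simp; linear_combination (90:ℝ) * sq 2)⟩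
    have hvd : ![e 0 * 10, 0, 0, e 3 * 40] ∈ Gface ![5 * e 0, e 1, 2 * e 2, e 3] :=
      ⟨Qpts_subset (mem8 (hSgn 0) (hSgn 3)), (by rw [Fin.sum_univ_four]; simp; linear_combination (50:ℝ) * sq 0 + 40 * sq 3)⟩
    have ha' := (hG ▸ hva).2
    have hb' := (hG ▸ hvb).2
    have hc' := (hG ▸ hvc).2
    have hd' := (hG ▸ hvd).2
    rw [Fin.sum_univ_four] at ha' hb' hc' hd'
    simp at ha' hb' hc' hd'
    have h0 : e' 0 = e 0 := pm_eq (he' 0) (he 0) (by linear_combination (1/90 : ℝ) * ha')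
    rw [h0] at hb' hd'
    have h1 : e' 1 = e 1 := pm_eq (he' 1) (he 1)
      (by linear_combination (1/15 : ℝ) * hb' - 5 * sq 0)
    have h2 : e' 2 = e 2 := pm_eq (he' 2) (he 2) (by linear_combination (1/90 : ℝ) * hc')
    have h3 : e' 3 = e 3 := pm_eq (he' 3) (he 3)
      (by linear_combination (1/40 : ℝ) * hd' - (5/4) * sq 0)
    rw [h0, h1, h2, h3]
  · -- w branch 1, w' branch 2 : impossible
    exfalso
    have hva : ![e 0 * 18, 0, 0, 0] ∈ Gface ![5 * e 0, e 1, 2 * e 2, e 3] :=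
      ⟨Qpts_subset (mem1 (hSgn 0)), (by rw [Fin.sum_univ_four]; simp; linear_combination (90:ℝ) * sq 0)⟩
    have ha' := (hG ▸ hva).2
    rw [Fin.sum_univ_four] at ha'
    simp at ha'
    exact pm_not5 (he' 0) (he 0) (by linear_combination (1/18 : ℝ) * ha')
  · -- w branch 2, w' branch 1 : impossible
    exfalso
    have hva : ![0, e 1 * 18, 0, 0] ∈ Gface ![e 0, 5 * e 1, e 2, 2 * e 3] :=
      ⟨Qpts_subset (mem2 (hSgn 1)), (by rw [Fin.sum_univ_four]; simp; linear_combination (90:ℝ) * sq 1)⟩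
    have ha' := (hG ▸ hva).2
    rw [Fin.sum_univ_four] at ha'
    simp at ha'
    exact pm_not5 (he' 1) (he 1) (by linear_combination (1/18 : ℝ) * ha')
  · -- both branch 2
    have hva : ![0, e 1 * 18, 0, 0] ∈ Gface ![e 0, 5 * e 1, e 2, 2 * e 3] :=
      ⟨Qpts_subset (mem2 (hSgn 1)), (by rw [Fin.sum_univ_four]; simp; linear_combination (90:ℝ) * sq 1)⟩
    have hvb : ![e 0 * 15, e 1 * 15, 0, 0] ∈ Gface ![e 0, 5 * e 1, e 2, 2 * e 3] :=
      ⟨Qpts_subset (mem5 (hSgn 0) (hSgn 1)), (by rw [Fin.sum_univ_four]; simp; linear_combination (15:ℝ) * sq 0 + 75 * sq 1)⟩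
    have hvc : ![0, 0, 0, e 3 * 45] ∈ Gface ![e 0, 5 * e 1, e 2, 2 * e 3] :=
      ⟨Qpts_subset (mem4 (hSgn 3)), (by rw [Fin.sum_univ_four]; simp; linear_combination (90:ℝ) * sq 3)⟩
    have hvd : ![0, e 1 * 10, e 2 * 40, 0] ∈ Gface ![e 0, 5 * e 1, e 2, 2 * e 3] :=
      ⟨Qpts_subset (mem7 (hSgn 1) (hSgn 2)), (by rw [Fin.sum_univ_four]; simp; linear_combination (50:ℝ) * sq 1 + 40 * sq 2)⟩
    have ha' := (hG ▸ hva).2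
    have hb' := (hG ▸ hvb).2
    have hc' := (hG ▸ hvc).2
    have hd' := (hG ▸ hvd).2
    rw [Fin.sum_univ_four] at ha' hb' hc' hd'
    simp at ha' hb' hc' hd'
    have h1 : e' 1 = e 1 := pm_eq (he' 1) (he 1) (by linear_combination (1/90 : ℝ) * ha')
    rw [h1] at hb' hd'
    have h0 : e' 0 = e 0 := pm_eq (he' 0) (he 0)
      (by linear_combination (1/15 : ℝ) * hb' - 5 * sq 1)
    have h3 : e' 3 = e 3 := pm_eq (he' 3) (he 3) (by linear_combination (1/90 : ℝ) * hc')
    have h2 : e' 2 = e 2 := pm_eq (he' 2) (he 2)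
      (by linear_combination (1/40 : ℝ) * hd' - (5/4) * sq 1)
    rw [h0, h1, h2, h3]

lemma facetSet_eq : {F | IsFacetOf F Qplus4} = Gface '' Wplus := by
  ext F
  constructor
  · intro h
    obtain ⟨w, hw, hFw⟩ := classify h
    exact ⟨w, hw, hFw.symm⟩
  · rintro ⟨w, hw, rfl⟩
    exact facet_Gw hw

lemma part3 : {F | IsFacetOf F Qplus4}.ncard = 32 := by
  rw [facetSet_eq, Set.ncard_image_of_injOn Gface_injOn, Wplus_ncard]

end Inj

/-- `Q⁺` has exactly 32 facets, given by the inequalities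
`±5x₁ ± x₂ ± 2x₃ ± x₄ ≤ 90` and `±x₁ ± 5x₂ ± x₃ ± 2x₄ ≤ 90`: each inequality is
valid on `Q⁺` and holds with equality on a 3-dimensional face (a facet), `Q⁺`
is exactly the solution set of the 32 inequalities, and the symmetry group of
`Q⁺` acts transitively on these facets. -/
theorem stmt14 :
    (∀ w ∈ Wplus,
      (∀ x ∈ Qplus4, ∑ i, w i * x i ≤ 90) ∧
      adim {x ∈ Qplus4 | ∑ i, w i * x i = 90} = 3 ∧
      IsFacetOf {x ∈ Qplus4 | ∑ i, w i * x i = 90} Qplus4) ∧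
    (∀ F, IsFacetOf F Qplus4 →
      ∃ w ∈ Wplus, F = {x ∈ Qplus4 | ∑ i, w i * x i = 90}) ∧
    {F | IsFacetOf F Qplus4}.ncard = 32 ∧
    Qplus4 = {x | ∀ w ∈ Wplus, ∑ i, w i * x i ≤ 90} ∧
    (∀ w ∈ Wplus, ∀ w' ∈ Wplus, ∃ T ∈ SymGrp, T '' Qplus4 = Qplus4 ∧
      T '' {x ∈ Qplus4 | ∑ i, w i * x i = 90} =
        {x ∈ Qplus4 | ∑ i, w' i * x i = 90}) := by
  refine ⟨?_, ?_, part3, Qplus4_eq_solset, ?_⟩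
  · intro w hw
    exact ⟨valid_on_Q hw, adim_Gw hw, facet_Gw hw⟩
  · intro F hF
    obtain ⟨w, hw, hFw⟩ := classify hF
    exact ⟨w, hw, hFw⟩
  · intro w hw w' hw'
    exact part5 hw hw'
end

section
/- The linear functional x ↦ 5x1 + x2 + 2x3 + x4 attains its maximum over Q− at the unique point (45,0,0,0), which is a vertex of Q−. Consequently, by the symmetries of the configuration, for every p in {(±5,±1,±2,±1), (±1,±5,±1,±2)} (the 32 outer facet normals of Q+) the functional x ↦ ⟨p, x⟩ attains its maximum over Q− at a unique point, which is a vertex of Q−; and symmetrically, for every p in {(±1,±2,±5,±1), (±2,±1,±1,±5)} (the 32 outer facet normals of Q−) the functional x ↦ ⟨p, x⟩ attains its maximum over Q+ at a unique point, which is a vertex of Q+. -/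
open scoped Pointwise

variable {V : Type*} [AddCommGroup V] [Module ℝ V]

/-- The 24 vertices of `Q⁻ ⊂ ℝ⁴`. -/
def QminusPts : Set (Fin 4 → ℝ) :=
  {x | ∃ a ∈ Sgn, ∃ b ∈ Sgn,
    x = ![0, 0, 0, a * 18] ∨ x = ![0, 0, a * 18, 0] ∨
    x = ![a * 45, 0, 0, 0] ∨ x = ![0, a * 45, 0, 0] ∨
    x = ![0, 0, a * 15, b * 15] ∨ x = ![a * 30, b * 30, 0, 0] ∨
    x = ![a * 40, 0, b * 10, 0] ∨ x = ![0, a * 40, 0, b * 10]}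

noncomputable def Qminus4 : Set (Fin 4 → ℝ) := convexHull ℝ QminusPts

/-- The 32 outer facet normals `(±1,±2,±5,±1)`, `(±2,±1,±1,±5)` of `Q⁻`. -/
def Wminus : Set (Fin 4 → ℝ) :=
  {w | ∃ e : Fin 4 → ℝ, (∀ i, e i = 1 ∨ e i = -1) ∧
    (w = ![e 0, 2 * e 1, 5 * e 2, e 3] ∨ w = ![2 * e 0, e 1, e 2, 5 * e 3])}

/-- The functional `x ↦ ⟨p, x⟩` attains its maximum over `P` at a unique point,
which is a vertex of `P`. -/
def UniqueVertexMax (p : Fin 4 → ℝ) (P : Set (Fin 4 → ℝ)) : Prop :=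
  ∃ m, m ∈ P ∧ IsVertexOf m P ∧ (∀ y ∈ P, ∑ i, p i * y i ≤ ∑ i, p i * m i) ∧
    ∀ y ∈ P, (∀ z ∈ P, ∑ i, p i * z i ≤ ∑ i, p i * y i) → y = m

attribute [local simp] Matrix.cons_val_two Matrix.cons_val_three

private def lf (p : Fin 4 → ℝ) : (Fin 4 → ℝ) →ₗ[ℝ] ℝ where
  toFun x := ∑ i, p i * x i
  map_add' x y := by simp [mul_add, Finset.sum_add_distrib]
  map_smul' c x := by simp [Finset.mul_sum, mul_left_comm]

lemma keyLemma {S : Set (Fin 4 → ℝ)} (p m : Fin 4 → ℝ) (hm : m ∈ S)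
    (hlt : ∀ y ∈ S, y ≠ m → ∑ i, p i * y i < ∑ i, p i * m i) :
    m ∈ convexHull ℝ S ∧ IsVertexOf m (convexHull ℝ S) ∧
    (∀ y ∈ convexHull ℝ S, ∑ i, p i * y i ≤ ∑ i, p i * m i) ∧
    (∀ y ∈ convexHull ℝ S, (∀ z ∈ convexHull ℝ S, ∑ i, p i * z i ≤ ∑ i, p i * y i) → y = m) := by
  have hleS : ∀ y ∈ S, lf p y ≤ lf p m := by
    intro y hy
    by_cases h : y = m
    · subst h; exact le_refl _
    · exact (hlt y hy h).le
  have hconv : Convex ℝ {y : Fin 4 → ℝ | lf p y ≤ lf p m} :=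
    convex_halfSpace_le (lf p).isLinear _
  have hmax : ∀ x ∈ convexHull ℝ S, lf p x ≤ lf p m := fun x hx => convexHull_min hleS hconv hx
  have hmem : m ∈ convexHull ℝ S := subset_convexHull ℝ S hm
  have huniq : ∀ x ∈ convexHull ℝ S, lf p m ≤ lf p x → x = m := by
    intro x hx hge
    rw [convexHull_eq] at hx
    obtain ⟨ι, t, w, z, hw0, hw1, hz, hcx⟩ := hx
    have hxeq : x = ∑ i ∈ t, w i • z i := by
      rw [← hcx, Finset.centerMass_eq_of_sum_1 _ _ hw1]
    have hall : ∀ i ∈ t, w i ≠ 0 → z i = m := by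
      by_contra hc
      push_neg at hc
      obtain ⟨i₀, hi₀, hwi₀, hzi₀⟩ := hc
      have hlfx : lf p x = ∑ i ∈ t, w i * lf p (z i) := by
        rw [hxeq, map_sum]
        simp [smul_eq_mul]
      have hlt' : ∑ i ∈ t, w i * lf p (z i) < ∑ i ∈ t, w i * lf p m := by
        apply Finset.sum_lt_sum
        · intro i hi
          exact mul_le_mul_of_nonneg_left (hleS (z i) (hz i hi)) (hw0 i hi)
        · exact ⟨i₀, hi₀, mul_lt_mul_of_pos_left (hlt (z i₀) (hz i₀ hi₀) hzi₀)
            ((hw0 i₀ hi₀).lt_of_ne (Ne.symm hwi₀))⟩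
      have hsum : ∑ i ∈ t, w i * lf p m = lf p m := by
        rw [← Finset.sum_mul, hw1, one_mul]
      rw [hlfx] at hge
      linarith
    have hx2 : x = ∑ i ∈ t, w i • m := by
      rw [hxeq]
      refine Finset.sum_congr rfl fun i hi => ?_
      by_cases h : w i = 0
      · simp [h]
      · rw [hall i hi h]
    rw [hx2, ← Finset.sum_smul, hw1, one_smul]
  refine ⟨hmem, ⟨lf p, ?_⟩, fun y hy => hmax y hy, fun y hy hy' => huniq y hy (hy' m hmem)⟩
  ext x
  simp only [Set.mem_singleton_iff, Set.mem_setOf_eq]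
  constructor
  · rintro rfl; exact ⟨hmem, hmax⟩
  · rintro ⟨hx, hmx⟩; exact huniq x hx (hmx m hmem)

lemma memQm3 (s : ℝ) (hs : s = 1 ∨ s = -1) : (![s * 45, 0, 0, 0] : Fin 4 → ℝ) ∈ QminusPts :=
  ⟨s, by simpa [Sgn] using hs, 1, by simp [Sgn], Or.inr (Or.inr (Or.inl rfl))⟩

lemma memQm4 (s : ℝ) (hs : s = 1 ∨ s = -1) : (![0, s * 45, 0, 0] : Fin 4 → ℝ) ∈ QminusPts :=
  ⟨s, by simpa [Sgn] using hs, 1, by simp [Sgn], Or.inr (Or.inr (Or.inr (Or.inl rfl)))⟩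

lemma memQp3 (s : ℝ) (hs : s = 1 ∨ s = -1) : (![0, 0, s * 45, 0] : Fin 4 → ℝ) ∈ QplusPts :=
  ⟨s, by simpa [Sgn] using hs, 1, by simp [Sgn], Or.inr (Or.inr (Or.inl rfl))⟩

lemma memQp4 (s : ℝ) (hs : s = 1 ∨ s = -1) : (![0, 0, 0, s * 45] : Fin 4 → ℝ) ∈ QplusPts :=
  ⟨s, by simpa [Sgn] using hs, 1, by simp [Sgn], Or.inr (Or.inr (Or.inr (Or.inl rfl)))⟩

lemma check1 (e0 e1 e2 e3 : ℝ) (h0 : e0 = 1 ∨ e0 = -1) (h1 : e1 = 1 ∨ e1 = -1)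
    (h2 : e2 = 1 ∨ e2 = -1) (h3 : e3 = 1 ∨ e3 = -1) :
    ∀ y ∈ QminusPts, y ≠ ![e0 * 45, 0, 0, 0] →
      ∑ i, (![5 * e0, e1, 2 * e2, e3] : Fin 4 → ℝ) i * y i <
      ∑ i, (![5 * e0, e1, 2 * e2, e3] : Fin 4 → ℝ) i * (![e0 * 45, 0, 0, 0] : Fin 4 → ℝ) i := by
  rintro y ⟨a, ha, b, hb, H⟩ hne
  simp only [Sgn, Set.mem_insert_iff, Set.mem_singleton_iff] at ha hb
  rcases H with rfl|rfl|rfl|rfl|rfl|rfl|rfl|rfl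
  · rcases h0 with rfl|rfl <;> rcases h3 with rfl|rfl <;> rcases ha with rfl|rfl <;>
      norm_num [Fin.sum_univ_four]
  · rcases h0 with rfl|rfl <;> rcases h2 with rfl|rfl <;> rcases ha with rfl|rfl <;>
      norm_num [Fin.sum_univ_four]
  · rcases h0 with rfl|rfl <;> rcases ha with rfl|rfl <;>
      first
        | exact absurd rfl hne
        | norm_num [Fin.sum_univ_four]
  · rcases h0 with rfl|rfl <;> rcases h1 with rfl|rfl <;> rcases ha with rfl|rfl <;>
      norm_num [Fin.sum_univ_four]
  · rcases h0 with rfl|rfl <;> rcases h2 with rfl|rfl <;> rcases h3 with rfl|rfl <;>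
      rcases ha with rfl|rfl <;> rcases hb with rfl|rfl <;> norm_num [Fin.sum_univ_four]
  · rcases h0 with rfl|rfl <;> rcases h1 with rfl|rfl <;>
      rcases ha with rfl|rfl <;> rcases hb with rfl|rfl <;> norm_num [Fin.sum_univ_four]
  · rcases h0 with rfl|rfl <;> rcases h2 with rfl|rfl <;>
      rcases ha with rfl|rfl <;> rcases hb with rfl|rfl <;> norm_num [Fin.sum_univ_four]
  · rcases h0 with rfl|rfl <;> rcases h1 with rfl|rfl <;> rcases h3 with rfl|rfl <;>
      rcases ha with rfl|rfl <;> rcases hb with rfl|rfl <;> norm_num [Fin.sum_univ_four]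

lemma check2 (e0 e1 e2 e3 : ℝ) (h0 : e0 = 1 ∨ e0 = -1) (h1 : e1 = 1 ∨ e1 = -1)
    (h2 : e2 = 1 ∨ e2 = -1) (h3 : e3 = 1 ∨ e3 = -1) :
    ∀ y ∈ QminusPts, y ≠ ![0, e1 * 45, 0, 0] →
      ∑ i, (![e0, 5 * e1, e2, 2 * e3] : Fin 4 → ℝ) i * y i <
      ∑ i, (![e0, 5 * e1, e2, 2 * e3] : Fin 4 → ℝ) i * (![0, e1 * 45, 0, 0] : Fin 4 → ℝ) i := by
  rintro y ⟨a, ha, b, hb, H⟩ hne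
  simp only [Sgn, Set.mem_insert_iff, Set.mem_singleton_iff] at ha hb
  rcases H with rfl|rfl|rfl|rfl|rfl|rfl|rfl|rfl
  · rcases h1 with rfl|rfl <;> rcases h3 with rfl|rfl <;> rcases ha with rfl|rfl <;> norm_num [Fin.sum_univ_four]
  · rcases h1 with rfl|rfl <;> rcases h2 with rfl|rfl <;> rcases ha with rfl|rfl <;> norm_num [Fin.sum_univ_four]
  · rcases h0 with rfl|rfl <;> rcases h1 with rfl|rfl <;> rcases ha with rfl|rfl <;> norm_num [Fin.sum_univ_four]
  · rcases h1 with rfl|rfl <;> rcases ha with rfl|rfl <;>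
      first
        | exact absurd rfl hne
        | norm_num [Fin.sum_univ_four]
  · rcases h1 with rfl|rfl <;> rcases h2 with rfl|rfl <;> rcases h3 with rfl|rfl <;> rcases ha with rfl|rfl <;> rcases hb with rfl|rfl <;> norm_num [Fin.sum_univ_four]
  · rcases h0 with rfl|rfl <;> rcases h1 with rfl|rfl <;> rcases ha with rfl|rfl <;> rcases hb with rfl|rfl <;> norm_num [Fin.sum_univ_four]
  · rcases h0 with rfl|rfl <;> rcases h1 with rfl|rfl <;> rcases h2 with rfl|rfl <;> rcases ha with rfl|rfl <;> rcases hb with rfl|rfl <;> norm_num [Fin.sum_univ_four]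
  · rcases h1 with rfl|rfl <;> rcases h3 with rfl|rfl <;> rcases ha with rfl|rfl <;> rcases hb with rfl|rfl <;> norm_num [Fin.sum_univ_four]

lemma check3 (e0 e1 e2 e3 : ℝ) (h0 : e0 = 1 ∨ e0 = -1) (h1 : e1 = 1 ∨ e1 = -1)
    (h2 : e2 = 1 ∨ e2 = -1) (h3 : e3 = 1 ∨ e3 = -1) :
    ∀ y ∈ QplusPts, y ≠ ![0, 0, e2 * 45, 0] →
      ∑ i, (![e0, 2 * e1, 5 * e2, e3] : Fin 4 → ℝ) i * y i <
      ∑ i, (![e0, 2 * e1, 5 * e2, e3] : Fin 4 → ℝ) i * (![0, 0, e2 * 45, 0] : Fin 4 → ℝ) i := by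
  rintro y ⟨a, ha, b, hb, H⟩ hne
  simp only [Sgn, Set.mem_insert_iff, Set.mem_singleton_iff] at ha hb
  rcases H with rfl|rfl|rfl|rfl|rfl|rfl|rfl|rfl
  · rcases h0 with rfl|rfl <;> rcases h2 with rfl|rfl <;> rcases ha with rfl|rfl <;> norm_num [Fin.sum_univ_four]
  · rcases h1 with rfl|rfl <;> rcases h2 with rfl|rfl <;> rcases ha with rfl|rfl <;> norm_num [Fin.sum_univ_four]
  · rcases h2 with rfl|rfl <;> rcases ha with rfl|rfl <;>
      first
        | exact absurd rfl hne
        | norm_num [Fin.sum_univ_four]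
  · rcases h2 with rfl|rfl <;> rcases h3 with rfl|rfl <;> rcases ha with rfl|rfl <;> norm_num [Fin.sum_univ_four]
  · rcases h0 with rfl|rfl <;> rcases h1 with rfl|rfl <;> rcases h2 with rfl|rfl <;> rcases ha with rfl|rfl <;> rcases hb with rfl|rfl <;> norm_num [Fin.sum_univ_four]
  · rcases h2 with rfl|rfl <;> rcases h3 with rfl|rfl <;> rcases ha with rfl|rfl <;> rcases hb with rfl|rfl <;> norm_num [Fin.sum_univ_four]
  · rcases h1 with rfl|rfl <;> rcases h2 with rfl|rfl <;> rcases ha with rfl|rfl <;> rcases hb with rfl|rfl <;> norm_num [Fin.sum_univ_four]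
  · rcases h0 with rfl|rfl <;> rcases h2 with rfl|rfl <;> rcases h3 with rfl|rfl <;> rcases ha with rfl|rfl <;> rcases hb with rfl|rfl <;> norm_num [Fin.sum_univ_four]

lemma check4 (e0 e1 e2 e3 : ℝ) (h0 : e0 = 1 ∨ e0 = -1) (h1 : e1 = 1 ∨ e1 = -1)
    (h2 : e2 = 1 ∨ e2 = -1) (h3 : e3 = 1 ∨ e3 = -1) :
    ∀ y ∈ QplusPts, y ≠ ![0, 0, 0, e3 * 45] →
      ∑ i, (![2 * e0, e1, e2, 5 * e3] : Fin 4 → ℝ) i * y i <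
      ∑ i, (![2 * e0, e1, e2, 5 * e3] : Fin 4 → ℝ) i * (![0, 0, 0, e3 * 45] : Fin 4 → ℝ) i := by
  rintro y ⟨a, ha, b, hb, H⟩ hne
  simp only [Sgn, Set.mem_insert_iff, Set.mem_singleton_iff] at ha hb
  rcases H with rfl|rfl|rfl|rfl|rfl|rfl|rfl|rfl
  · rcases h0 with rfl|rfl <;> rcases h3 with rfl|rfl <;> rcases ha with rfl|rfl <;> norm_num [Fin.sum_univ_four]
  · rcases h1 with rfl|rfl <;> rcases h3 with rfl|rfl <;> rcases ha with rfl|rfl <;> norm_num [Fin.sum_univ_four]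
  · rcases h2 with rfl|rfl <;> rcases h3 with rfl|rfl <;> rcases ha with rfl|rfl <;> norm_num [Fin.sum_univ_four]
  · rcases h3 with rfl|rfl <;> rcases ha with rfl|rfl <;>
      first
        | exact absurd rfl hne
        | norm_num [Fin.sum_univ_four]
  · rcases h0 with rfl|rfl <;> rcases h1 with rfl|rfl <;> rcases h3 with rfl|rfl <;> rcases ha with rfl|rfl <;> rcases hb with rfl|rfl <;> norm_num [Fin.sum_univ_four]
  · rcases h2 with rfl|rfl <;> rcases h3 with rfl|rfl <;> rcases ha with rfl|rfl <;> rcases hb with rfl|rfl <;> norm_num [Fin.sum_univ_four]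
  · rcases h1 with rfl|rfl <;> rcases h2 with rfl|rfl <;> rcases h3 with rfl|rfl <;> rcases ha with rfl|rfl <;> rcases hb with rfl|rfl <;> norm_num [Fin.sum_univ_four]
  · rcases h0 with rfl|rfl <;> rcases h3 with rfl|rfl <;> rcases ha with rfl|rfl <;> rcases hb with rfl|rfl <;> norm_num [Fin.sum_univ_four]


/-- The functional `x ↦ 5x₁ + x₂ + 2x₃ + x₄` attains its
maximum over `Q⁻` at the unique point `(45,0,0,0)`, a vertex of `Q⁻`; and, by
symmetry, every one of the 32 facet normals of `Q⁺` attains its maximum over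
`Q⁻` at a unique point which is a vertex, and symmetrically every facet normal
of `Q⁻` attains its maximum over `Q⁺` at a unique point which is a vertex. -/
theorem stmt15 :
    ((![45, 0, 0, 0] : Fin 4 → ℝ) ∈ Qminus4 ∧
      IsVertexOf (![45, 0, 0, 0] : Fin 4 → ℝ) Qminus4 ∧
      (∀ y ∈ Qminus4, ∑ i, (![5, 1, 2, 1] : Fin 4 → ℝ) i * y i ≤
        ∑ i, (![5, 1, 2, 1] : Fin 4 → ℝ) i * (![45, 0, 0, 0] : Fin 4 → ℝ) i) ∧
      (∀ y ∈ Qminus4,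
        (∀ z ∈ Qminus4, ∑ i, (![5, 1, 2, 1] : Fin 4 → ℝ) i * z i ≤
          ∑ i, (![5, 1, 2, 1] : Fin 4 → ℝ) i * y i) →
        y = ![45, 0, 0, 0])) ∧
    (∀ p ∈ Wplus, UniqueVertexMax p Qminus4) ∧
    (∀ p ∈ Wminus, UniqueVertexMax p Qplus4) := by
  refine ⟨?_, ?_, ?_⟩
  · have h := keyLemma (S := QminusPts) ![5 * (1:ℝ), 1, 2 * 1, 1] ![(1:ℝ) * 45, 0, 0, 0]
      (memQm3 1 (Or.inl rfl))
      (check1 1 1 1 1 (Or.inl rfl) (Or.inl rfl) (Or.inl rfl) (Or.inl rfl))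
    norm_num at h
    exact h
  · rintro p ⟨e, he, hp | hp⟩
    · subst hp
      obtain ⟨h1, h2, h3, h4⟩ := keyLemma (S := QminusPts) _ ![e 0 * 45, 0, 0, 0]
        (memQm3 (e 0) (he 0)) (check1 (e 0) (e 1) (e 2) (e 3) (he 0) (he 1) (he 2) (he 3))
      exact ⟨_, h1, h2, h3, h4⟩
    · subst hp
      obtain ⟨h1, h2, h3, h4⟩ := keyLemma (S := QminusPts) _ ![0, e 1 * 45, 0, 0]
        (memQm4 (e 1) (he 1)) (check2 (e 0) (e 1) (e 2) (e 3) (he 0) (he 1) (he 2) (he 3))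
      exact ⟨_, h1, h2, h3, h4⟩
  · rintro p ⟨e, he, hp | hp⟩
    · subst hp
      obtain ⟨h1, h2, h3, h4⟩ := keyLemma (S := QplusPts) _ ![0, 0, e 2 * 45, 0]
        (memQp3 (e 2) (he 2)) (check3 (e 0) (e 1) (e 2) (e 3) (he 0) (he 1) (he 2) (he 3))
      exact ⟨_, h1, h2, h3, h4⟩
    · subst hp
      obtain ⟨h1, h2, h3, h4⟩ := keyLemma (S := QplusPts) _ ![0, 0, 0, e 3 * 45]
        (memQp4 (e 3) (he 3)) (check4 (e 0) (e 1) (e 2) (e 3) (he 0) (he 1) (he 2) (he 3))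
      exact ⟨_, h1, h2, h3, h4⟩
end
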